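/- arXiv:1908.10786 — 3 statements merged into one kernel-verified Lean document; each statement's English description precedes it below -/
import Mathlib

section
/- Let W be a standard d-dimensional Brownian motion, (𝕋ₙ) a balanced sequence of partitions of [r,T] with constant c_𝕋, and ₙW := Lₙ(W) the delayed piecewise-linear (adapted, one-step-delayed) interpolation of W along 𝕋ₙ. Let Z ∼ 𝒩(0, I_d) and ŵ_{p,q} := E[|Z|^{pq}] c_𝕋^{pq}. Then for all p ≥ 1, q > 0, all n ∈ ℕ, and all r ≤ s ≤ t ≤ T: E[ (∫_s^t |ₙẆ_u|^q du)^p ] ≤ ŵ_{p,q} |𝕋ₙ|^{−pq/2} (t−s)^p. -/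
open MeasureTheory ProbabilityTheory Filter Set ENNReal

noncomputable section

abbrev Vec (m : ℕ) := EuclideanSpace ℝ (Fin m)
abbrev Mat (m d : ℕ) := EuclideanSpace ℝ (Fin m × Fin d)

def matVec {m d : ℕ} (A : Mat m d) (v : Vec d) : Vec m :=
  (EuclideanSpace.equiv (Fin m) ℝ).symm fun k => ∑ l, A (k, l) * v l

/-- Path stopped at time `s`. -/
def stopAt {E : Type*} (x : ℝ → E) (s : ℝ) : ℝ → E := fun u => x (min u s)

/-- Sup norm over `[0,T]`. -/
def supNorm {E : Type*} [NormedAddCommGroup E] (T : ℝ) (x : ℝ → E) : ℝ :=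
  ⨆ u : Icc (0:ℝ) T, ‖x u‖

def esupNorm {E : Type*} [NormedAddCommGroup E] (T : ℝ) (x : ℝ → E) : ℝ≥0∞ :=
  ⨆ u : Icc (0:ℝ) T, (‖x u‖₊ : ℝ≥0∞)

/-- The pseudometric `d_∞((t,x),(s,y)) = |t-s|^{1/2} + ‖x^t - y^s‖_∞`. -/
def dInfty {E : Type*} [NormedAddCommGroup E] (T t : ℝ) (x : ℝ → E) (s : ℝ) (y : ℝ → E) : ℝ :=
  |t - s| ^ (1/2 : ℝ) + supNorm T (fun u => stopAt x t u - stopAt y s u)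

/-- Delayed α-Hölder norm on `[0,T]` with Hölder seminorm over `[r,T]`. -/
def holderNorm {E : Type*} [NormedAddCommGroup E] (α r T : ℝ) (x : ℝ → E) : ℝ :=
  supNorm T (stopAt x r) +
    ⨆ p : {q : Icc r T × Icc r T // (q.1 : ℝ) ≠ (q.2 : ℝ)},
      ‖x p.1.1 - x p.1.2‖ / |(p.1.1 : ℝ) - (p.1.2 : ℝ)| ^ α

def eholderNorm {E : Type*} [NormedAddCommGroup E] (α r T : ℝ) (x : ℝ → E) : ℝ≥0∞ :=
  esupNorm T (stopAt x r) +
    ⨆ (s : Icc r T) (t : Icc r T) (_ : (s : ℝ) ≠ (t : ℝ)),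
      (‖x s - x t‖₊ : ℝ≥0∞) / ENNReal.ofReal (|(s : ℝ) - (t : ℝ)| ^ α)

/-- A sequence of partitions of `[r,T]`. -/
structure PartitionSeq (r T : ℝ) where
  k : ℕ → ℕ
  t : ℕ → ℕ → ℝ
  k_pos : ∀ n, 0 < k n
  left : ∀ n, t n 0 = r
  right : ∀ n, t n (k n) = T
  mono : ∀ n, ∀ i < k n, t n i < t n (i + 1)

def PartitionSeq.mesh {r T : ℝ} (P : PartitionSeq r T) (n : ℕ) : ℝ :=
  (Finset.range (P.k n)).sup' (Finset.nonempty_range_iff.mpr (P.k_pos n).ne')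
    (fun i => P.t n (i + 1) - P.t n i)

/-- Balanced sequence of partitions with constant `c`. -/
def PartitionSeq.Balanced {r T : ℝ} (P : PartitionSeq r T) (c : ℝ) : Prop :=
  ∀ n, ∀ i < P.k n, P.mesh n ≤ c * (P.t n (i + 1) - P.t n i)

open Classical in
/-- Greatest index `i ≤ kₙ` with `t_{i,n} < u`. -/
def PartitionSeq.idxLt {r T : ℝ} (P : PartitionSeq r T) (n : ℕ) (u : ℝ) : ℕ :=
  Nat.findGreatest (fun i => P.t n i < u) (P.k n)

open Classical in
/-- Greatest index `i ≤ kₙ - 1` with `t_{i,n} ≤ u`. -/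
def PartitionSeq.idxLe {r T : ℝ} (P : PartitionSeq r T) (n : ℕ) (u : ℝ) : ℕ :=
  Nat.findGreatest (fun i => P.t n i ≤ u) (P.k n - 1)

/-- `uₙ`, the partition point below `u`. -/
def PartitionSeq.below {r T : ℝ} (P : PartitionSeq r T) (n : ℕ) (u : ℝ) : ℝ :=
  P.t n (P.idxLe n u)

/-- `u̲ₙ`, the predecessor of the partition point below `u`. -/
def PartitionSeq.pred {r T : ℝ} (P : PartitionSeq r T) (n : ℕ) (u : ℝ) : ℝ :=
  P.t n (P.idxLe n u - 1)

/-- `γₙ(u) = Δuₙ / Δūₙ`. -/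
def PartitionSeq.gamma {r T : ℝ} (P : PartitionSeq r T) (n : ℕ) (u : ℝ) : ℝ :=
  (P.t n (P.idxLe n u) - P.t n (P.idxLe n u - 1)) /
    (P.t n (P.idxLe n u + 1) - P.t n (P.idxLe n u))

/-- Delayed piecewise-linear interpolation along the `n`-th partition. -/
def PartitionSeq.interp {r T : ℝ} (P : PartitionSeq r T) (n : ℕ) {E : Type*}
    [NormedAddCommGroup E] [NormedSpace ℝ E] (x : ℝ → E) (u : ℝ) : E :=
  if u ≤ P.t n 1 then x (min u r)
  else x (P.t n (P.idxLt n u - 1)) +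
    ((u - P.t n (P.idxLt n u)) / (P.t n (P.idxLt n u + 1) - P.t n (P.idxLt n u))) •
      (x (P.t n (P.idxLt n u)) - x (P.t n (P.idxLt n u - 1)))

/-- Piecewise-constant derivative of the delayed linear interpolation. -/
def PartitionSeq.interpDeriv {r T : ℝ} (P : PartitionSeq r T) (n : ℕ) {E : Type*}
    [NormedAddCommGroup E] [NormedSpace ℝ E] (x : ℝ → E) (u : ℝ) : E :=
  if u ≤ P.t n 1 then 0
  else (P.t n (P.idxLt n u + 1) - P.t n (P.idxLt n u))⁻¹ •
    (x (P.t n (P.idxLt n u)) - x (P.t n (P.idxLt n u - 1)))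

/-- Standard d-dimensional Brownian motion. -/
def IsBrownianMotion {Ω : Type*} [MeasurableSpace Ω] {d : ℕ}
    (μ : Measure Ω) (W : ℝ → Ω → Vec d) : Prop :=
  (∀ ω, Continuous fun u => W u ω) ∧ (∀ᵐ ω ∂μ, W 0 ω = 0) ∧
  (∀ (N : ℕ) (τ : ℕ → ℝ), Monotone τ → (∀ i, 0 ≤ τ i) →
    iIndepFun
      (fun p : Fin N × Fin d => fun ω => W (τ (p.1 + 1)) ω p.2 - W (τ p.1) ω p.2) μ) ∧
  (∀ s u : ℝ, 0 ≤ s → s ≤ u → ∀ l : Fin d,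
    Measure.map (fun ω => W u ω l - W s ω l) μ = gaussianReal 0 (Real.toNNReal (u - s)))

/-- Brownian motion with respect to a filtration. -/
def IsFilteredBM {Ω : Type*} [mΩ : MeasurableSpace Ω] {d : ℕ} (μ : Measure Ω)
    (F : Filtration ℝ mΩ) (W : ℝ → Ω → Vec d) : Prop :=
  IsBrownianMotion μ W ∧ Adapted F W ∧
  ∀ s u : ℝ, 0 ≤ s → s ≤ u →
    Indep (MeasurableSpace.comap (fun ω => W u ω - W s ω) inferInstance) (F s) μ

/-- Riemann sum for a stochastic integral. -/
def riemannSum {Ω : Type*} {m d : ℕ} (W : ℝ → Ω → Vec d) (X : ℝ → Ω → Mat m d)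
    (τ : ℕ → ℝ) (K : ℕ) (ω : Ω) : Vec m :=
  ∑ i ∈ Finset.range K, matVec (X (τ i) ω) (W (τ (i + 1)) ω - W (τ i) ω)

/-- `I` is the Itô integral `∫_a^b X dW`: left-point Riemann sums along any sequence of
partitions of `[a,b]` with vanishing mesh converge to `I` in measure (in probability). -/
def IsItoIntegral {Ω : Type*} [MeasurableSpace Ω] {m d : ℕ} (μ : Measure Ω)
    (W : ℝ → Ω → Vec d) (X : ℝ → Ω → Mat m d) (a b : ℝ) (I : Ω → Vec m) : Prop :=
  ∀ (τ : ℕ → ℕ → ℝ) (K : ℕ → ℕ),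
    (∀ n, 0 < K n ∧ τ n 0 = a ∧ τ n (K n) = b ∧ ∀ i < K n, τ n i < τ n (i + 1)) →
    Tendsto (fun n => ⨆ i : Fin (K n), (τ n (i + 1) - τ n i)) atTop (nhds 0) →
    TendstoInMeasure μ (fun n ω => riemannSum W X (τ n) (K n) ω) atTop I

/-- Vertical perturbation of a path at time `s`. -/
def vertShift {E : Type*} [Add E] (x : ℝ → E) (s : ℝ) (h : E) : ℝ → E :=
  fun u => if s ≤ u then x u + h else x u

/-- Vertical (Dupire) derivative of a non-anticipative functional. -/
def HasVertDerivAt {E F : Type*} [NormedAddCommGroup E] [NormedSpace ℝ E]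
    [NormedAddCommGroup F] [NormedSpace ℝ F]
    (G : ℝ → (ℝ → E) → F) (s : ℝ) (x : ℝ → E) (D : E →L[ℝ] F) : Prop :=
  HasFDerivAt (fun h : E => G s (vertShift x s h)) D 0

/-- Horizontal derivative of a non-anticipative functional. -/
def HasHorizDerivAt {E F : Type*} [NormedAddCommGroup E]
    [NormedAddCommGroup F] [NormedSpace ℝ F]
    (G : ℝ → (ℝ → E) → F) (s : ℝ) (x : ℝ → E) (D : F) : Prop :=
  HasDerivWithinAt (fun u => G u (stopAt x s)) D (Ici s) s

/-- Càdlàg path on `ℝ`. -/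
def Cadlag {E : Type*} [TopologicalSpace E] (x : ℝ → E) : Prop :=
  (∀ u, ContinuousWithinAt x (Ici u) u) ∧ ∀ u, ∃ L, Tendsto x (nhdsWithin u (Iio u)) (nhds L)

/-- `d_∞`-continuity of a functional on `[r,t₀) × D`. -/
def DInftyContinuous {E F : Type*} [NormedAddCommGroup E] [NormedAddCommGroup F]
    (r t₀ T : ℝ) (G : ℝ → (ℝ → E) → F) : Prop :=
  ∀ s ∈ Ico r t₀, ∀ x : ℝ → E, Cadlag x → ∀ ε > 0, ∃ δ > 0,
    ∀ u ∈ Ico r t₀, ∀ y : ℝ → E, Cadlag y → dInfty T u y s x < δ → ‖G u y - G s x‖ < ε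

/-- Bounded on bounded sets. -/
def BddOnBounded {E F : Type*} [NormedAddCommGroup E] [NormedAddCommGroup F]
    (r t₀ T : ℝ) (G : ℝ → (ℝ → E) → F) : Prop :=
  ∀ R > 0, ∃ C, ∀ s ∈ Ico r t₀, ∀ x : ℝ → E, Cadlag x → supNorm T x ≤ R → ‖G s x‖ ≤ C

/-- The correction term `ρ` built from the vertical derivative of `σ`. -/
def corrTerm {m d : ℕ} (σ : ℝ → ℝ → (ℝ → Vec m) → Mat m d)
    (σx : ℝ → ℝ → (ℝ → Vec m) → (Vec m →L[ℝ] Mat m d))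
    (t s : ℝ) (x : ℝ → Vec m) : Vec m :=
  if s < t then
    (EuclideanSpace.equiv (Fin m) ℝ).symm fun k =>
      ∑ l, (σx t s x ((EuclideanSpace.equiv (Fin m) ℝ).symm fun k' => σ s s x (k', l))) (k, l)
  else 0


/-- Delayed Sobolev norm `‖x‖_{1,p,r}` computed from a choice `x'` of weak derivative. -/
def sobNorm {E : Type*} [NormedAddCommGroup E] (p r T : ℝ) (x x' : ℝ → E) : ℝ :=
  supNorm T (stopAt x r) + (∫ s in Icc r T, ‖x' s‖ ^ p) ^ (1/p)

/-- Membership in the delayed Sobolev space `W_r^{1,p}([0,T],E)`, witnessed by the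
weak derivative `x'`. -/
def IsW1p {E : Type*} [NormedAddCommGroup E] [NormedSpace ℝ E] (p r T : ℝ)
    (x x' : ℝ → E) : Prop :=
  ContinuousOn x (Icc 0 T) ∧ IntervalIntegrable x' MeasureTheory.volume r T ∧
  (∀ t ∈ Icc r T, x t = x r + ∫ s in r..t, x' s) ∧
  MeasureTheory.IntegrableOn (fun s => ‖x' s‖ ^ p) (Icc r T) MeasureTheory.volume

/-- Solution of a path-dependent stochastic Volterra integral equation on `[r,T]` with
(possibly `ω`-dependent) drift `drift` and diffusion `Sig`; `S t` is the Itô integral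
`∫_r^t Sig(t,s,·) dW_s`. -/
def SolvesSVIE {m d : ℕ} {Ω : Type*} [MeasurableSpace Ω] (μ : Measure Ω)
    (W : ℝ → Ω → Vec d) (r T : ℝ)
    (drift : ℝ → ℝ → Ω → Vec m) (Sig : ℝ → ℝ → Ω → Mat m d)
    (Y : ℝ → Ω → Vec m) (S : ℝ → Ω → Vec m) : Prop :=
  (∀ ω, Continuous fun u => Y u ω) ∧
  (∀ t ∈ Icc r T, ∀ᵐ ω ∂μ, MeasureTheory.IntegrableOn (fun s => drift t s ω) (Ioc r t)) ∧
  (∀ t ∈ Icc r T, IsItoIntegral μ W (fun s => Sig t s) r t (S t)) ∧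
  (∀ t ∈ Icc r T, ∀ᵐ ω ∂μ, Y t ω = Y r ω + (∫ s in Ioc r t, drift t s ω) + S t ω)

/-- σ-algebra generated by `ξ` stopped at `r` up to time `t` and the increments of `W`
after time `r` up to time `t` (generating the filtration used for strong solutions). -/
def naturalSigma {m d : ℕ} {Ω : Type*} [MeasurableSpace Ω]
    (ξ : ℝ → Ω → Vec m) (W : ℝ → Ω → Vec d) (r t : ℝ) : MeasurableSpace Ω :=
  (⨆ s ∈ Icc (0:ℝ) t, MeasurableSpace.comap (fun ω => ξ (min s r) ω) inferInstance) ⊔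
  (⨆ s ∈ Icc r (max r t), MeasurableSpace.comap (fun ω => W s ω - W r ω) inferInstance)

/-- `x` solves the deterministic Volterra integral equation
`x(t) = x(r) + ∫_r^t (b - ρ/2)(t,s,x) ds + ∫_r^t σ(t,s,x) dh(s)` on `[r,T]` with initial
condition `x^r = x̂^r`, where `h` has weak derivative `h'`. -/
def SolvesSupportVIE {m d : ℕ} (r T : ℝ)
    (b : ℝ → ℝ → (ℝ → Vec m) → Vec m)
    (σ : ℝ → ℝ → (ℝ → Vec m) → Mat m d)
    (σx : ℝ → ℝ → (ℝ → Vec m) → (Vec m →L[ℝ] Mat m d))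
    (xhat : ℝ → Vec m) (h' : ℝ → Vec d) (x : ℝ → Vec m) : Prop :=
  ContinuousOn x (Icc 0 T) ∧ (∀ u ∈ Icc 0 r, x u = xhat u) ∧
  (∀ t ∈ Icc r T, MeasureTheory.IntegrableOn
    (fun s => b t s x - (1/2 : ℝ) • corrTerm σ σx t s x + matVec (σ t s x) (h' s)) (Ioc r t)) ∧
  (∀ t ∈ Icc r T, x t = x r +
    ∫ s in Ioc r t, (b t s x - (1/2 : ℝ) • corrTerm σ σx t s x + matVec (σ t s x) (h' s)))

/-- The extension `ρ̄` of the correction term to the closed triangle `s ≤ t`. -/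
def corrTermBar {m d : ℕ} (σ : ℝ → ℝ → (ℝ → Vec m) → Mat m d)
    (σx : ℝ → ℝ → (ℝ → Vec m) → (Vec m →L[ℝ] Mat m d))
    (t s : ℝ) (x : ℝ → Vec m) : Vec m :=
  if s ≤ t then
    (EuclideanSpace.equiv (Fin m) ℝ).symm fun k =>
      ∑ l, (σx t s x ((EuclideanSpace.equiv (Fin m) ℝ).symm fun k' => σ s s x (k', l))) (k, l)
  else 0

/-- The weak derivative `∂_t ρ̄` of the extended correction term in its first variable,
built from `∂_t ∂_x σ`. -/
def corrTermBarT {m d : ℕ} (σ : ℝ → ℝ → (ℝ → Vec m) → Mat m d)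
    (σxt : ℝ → ℝ → (ℝ → Vec m) → (Vec m →L[ℝ] Mat m d))
    (t s : ℝ) (x : ℝ → Vec m) : Vec m :=
  if s ≤ t then
    (EuclideanSpace.equiv (Fin m) ℝ).symm fun k =>
      ∑ l, (σxt t s x ((EuclideanSpace.equiv (Fin m) ℝ).symm fun k' => σ s s x (k', l))) (k, l)
  else 0

end

section AuxBM

lemma aux_jensen {ι : Type*} (s : Finset ι) (lam B : ι → ℝ≥0∞) (D : ℝ≥0∞)
    (hD : ∑ i ∈ s, lam i ≤ D) (hD0 : D ≠ 0) (hDt : D ≠ ∞) (hB : ∀ i ∈ s, B i ≠ ∞)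
    {p : ℝ} (hp : 1 ≤ p) :
    (∑ i ∈ s, lam i * B i) ^ p ≤ D ^ (p - 1) * ∑ i ∈ s, lam i * B i ^ p := by
  classical
  have hp0 : (0:ℝ) < p := lt_of_lt_of_le one_pos hp
  have hDinv : D⁻¹ ≠ ∞ := by simpa using hD0
  have hsum : ∑ i ∈ s, lam i * D⁻¹ ≤ 1 := by
    rw [← Finset.sum_mul]
    calc (∑ i ∈ s, lam i) * D⁻¹ ≤ D * D⁻¹ := mul_le_mul_left hD _
    _ = 1 := ENNReal.mul_inv_cancel hD0 hDt
  set w : Option ι → ℝ≥0∞ := fun o => o.elim (1 - ∑ i ∈ s, lam i * D⁻¹) (fun i => lam i * D⁻¹)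
    with hw
  set z : Option ι → ℝ≥0∞ := fun o => o.elim 0 B with hz
  have hw1 : ∑ o ∈ Finset.insertNone s, w o = 1 := by
    rw [Finset.sum_insertNone]
    exact tsub_add_cancel_of_le hsum
  have main := ENNReal.rpow_arith_mean_le_arith_mean_rpow (Finset.insertNone s) w z hw1 hp
  rw [Finset.sum_insertNone, Finset.sum_insertNone] at main
  simp only [hw, hz, Option.elim, mul_zero, zero_add,
    ENNReal.zero_rpow_of_pos hp0] at main
  have h1 : ∑ i ∈ s, lam i * D⁻¹ * B i = D⁻¹ * ∑ i ∈ s, lam i * B i := by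
    rw [Finset.mul_sum]; exact Finset.sum_congr rfl fun i _ => by ring
  have h2 : ∑ i ∈ s, lam i * D⁻¹ * B i ^ p = D⁻¹ * ∑ i ∈ s, lam i * B i ^ p := by
    rw [Finset.mul_sum]; exact Finset.sum_congr rfl fun i _ => by ring
  rw [h1, h2] at main
  have hlam : ∀ i ∈ s, lam i ≠ ∞ := fun i hi =>
    ne_top_of_le_ne_top hDt (le_trans (Finset.single_le_sum (f := lam) (fun _ _ => zero_le) hi) hD)
  have hS : (∑ i ∈ s, lam i * B i) ≠ ∞ := by
    rw [ne_eq, ENNReal.sum_eq_top]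
    push_neg
    exact fun i hi => ENNReal.mul_ne_top (hlam i hi) (hB i hi)
  rw [ENNReal.mul_rpow_of_ne_top hDinv hS] at main
  have hcancel : D ^ p * (D⁻¹) ^ p = 1 := by
    rw [← ENNReal.mul_rpow_of_ne_top hDt hDinv, ENNReal.mul_inv_cancel hD0 hDt,
      ENNReal.one_rpow]
  calc (∑ i ∈ s, lam i * B i) ^ p
      = D ^ p * ((D⁻¹) ^ p * (∑ i ∈ s, lam i * B i) ^ p) := by
        rw [← mul_assoc, hcancel, one_mul]
    _ ≤ D ^ p * (D⁻¹ * ∑ i ∈ s, lam i * B i ^ p) := mul_le_mul_right main _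
    _ = (D ^ p * D ^ (-1 : ℝ)) * ∑ i ∈ s, lam i * B i ^ p := by
        rw [ENNReal.rpow_neg_one, mul_assoc]
    _ = D ^ (p - 1) * ∑ i ∈ s, lam i * B i ^ p := by
        rw [← ENNReal.rpow_add p (-1) hD0 hDt, sub_eq_add_neg]

lemma aux_joint_law {d : ℕ} {Ω : Type*} [MeasurableSpace Ω] (μ : Measure Ω)
    [IsProbabilityMeasure μ]
    (X : Fin d → Ω → ℝ) (V : Fin d → NNReal)
    (hmul : ∀ box : Fin d → Set ℝ, (∀ l, MeasurableSet (box l)) →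
      μ (⋂ l, X l ⁻¹' box l) = ∏ l, μ (X l ⁻¹' box l))
    (hmarg : ∀ l, μ.map (X l) = gaussianReal 0 (V l)) :
    μ.map (fun ω l => X l ω) = Measure.pi (fun l => gaussianReal 0 (V l)) := by
  have hXm : ∀ l, AEMeasurable (X l) μ := fun l =>
    aemeasurable_of_map_neZero (by rw [hmarg l]; infer_instance)
  have hjoint : AEMeasurable (fun ω l => X l ω) μ := by
    refine ⟨fun ω l => (hXm l).mk _ ω, measurable_pi_lambda _ fun l => (hXm l).measurable_mk, ?_⟩
    filter_upwards [ae_all_iff.mpr fun l => (hXm l).ae_eq_mk] with ω hω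
    exact funext fun l => hω l
  refine ((Measure.pi_eq fun box hbox => ?_)).symm
  rw [Measure.map_apply_of_aemeasurable hjoint (MeasurableSet.univ_pi hbox)]
  have hpre : (fun ω l => X l ω) ⁻¹' Set.pi Set.univ box = ⋂ l, X l ⁻¹' box l := by
    ext ω; simp [Set.mem_pi]
  rw [hpre, hmul box hbox]
  exact Finset.prod_congr rfl fun l _ => by
    rw [← hmarg l, Measure.map_apply_of_aemeasurable (hXm l) (hbox l)]

lemma aux_pi_gauss_scale (d : ℕ) {Δ : ℝ} (hΔ : 0 ≤ Δ) :
    (Measure.pi fun _ : Fin d => gaussianReal 0 Δ.toNNReal) =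
      (Measure.pi fun _ : Fin d => gaussianReal 0 1).map fun v l => Real.sqrt Δ * v l := by
  have hφ : Measurable fun (v : Fin d → ℝ) l => Real.sqrt Δ * v l :=
    measurable_pi_lambda _ fun l => (measurable_pi_apply l).const_mul _
  refine Measure.pi_eq fun box hbox => ?_
  rw [Measure.map_apply hφ (MeasurableSet.univ_pi hbox)]
  have hpre : (fun (v : Fin d → ℝ) l => Real.sqrt Δ * v l) ⁻¹' Set.pi Set.univ box
      = Set.pi Set.univ fun l => (Real.sqrt Δ * ·) ⁻¹' box l := by
    ext v; simp [Set.mem_pi]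
  rw [hpre, Measure.pi_pi]
  refine Finset.prod_congr rfl fun l _ => ?_
  rw [← Measure.map_apply (measurable_const_mul _) (hbox l), gaussianReal_map_const_mul]
  have hvar : (⟨Real.sqrt Δ ^ 2, sq_nonneg _⟩ : NNReal) * 1 = Δ.toNNReal := by
    ext
    simp [Real.sq_sqrt hΔ, Real.coe_toNNReal _ hΔ]
  rw [mul_zero]
  exact congrArg (fun v => (gaussianReal 0 v) (box l)) hvar

lemma aux_lintegral_norm_rpow {d : ℕ} {Ω : Type*} [MeasurableSpace Ω] (μ : Measure Ω)
    {Ω' : Type*} [MeasurableSpace Ω'] (μ' : Measure Ω')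
    (X : Fin d → Ω → ℝ) (Z : Fin d → Ω' → ℝ) {Δ : ℝ} (hΔ : 0 ≤ Δ)
    (hX : μ.map (fun ω l => X l ω) = Measure.pi fun _ => gaussianReal 0 Δ.toNNReal)
    (hZ : μ'.map (fun ω l => Z l ω) = Measure.pi fun _ => gaussianReal 0 1)
    {e : ℝ} (he : 0 ≤ e) :
    ∫⁻ ω, ENNReal.ofReal (Real.sqrt (∑ l, (X l ω) ^ 2)) ^ e ∂μ
      = ENNReal.ofReal (Real.sqrt Δ) ^ e
        * ∫⁻ ω', ENNReal.ofReal (Real.sqrt (∑ l, (Z l ω') ^ 2)) ^ e ∂μ' := by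
  set G : (Fin d → ℝ) → ℝ≥0∞ := fun v => ENNReal.ofReal (Real.sqrt (∑ l, v l ^ 2)) ^ e with hG
  have hGm : Measurable G := by
    apply Measurable.pow _ measurable_const
    apply ENNReal.measurable_ofReal.comp
    apply Measurable.sqrt
    exact Finset.measurable_sum _ fun l _ => (measurable_pi_apply l).pow measurable_const
  have hXjm : AEMeasurable (fun ω l => X l ω) μ :=
    aemeasurable_of_map_neZero (by rw [hX]; infer_instance)
  have hZjm : AEMeasurable (fun ω l => Z l ω) μ' :=
    aemeasurable_of_map_neZero (by rw [hZ]; infer_instance)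
  have hφ : Measurable fun (v : Fin d → ℝ) l => Real.sqrt Δ * v l :=
    measurable_pi_lambda _ fun l => (measurable_pi_apply l).const_mul _
  have hGscale : ∀ v : Fin d → ℝ, G (fun l => Real.sqrt Δ * v l)
      = ENNReal.ofReal (Real.sqrt Δ) ^ e * G v := by
    intro v
    have h1 : (∑ l, (Real.sqrt Δ * v l) ^ 2) = Δ * ∑ l, v l ^ 2 := by
      rw [Finset.mul_sum]
      exact Finset.sum_congr rfl fun l _ => by
        rw [mul_pow, Real.sq_sqrt hΔ]
    rw [hG]
    simp only [h1]
    rw [Real.sqrt_mul hΔ, ENNReal.ofReal_mul (Real.sqrt_nonneg _),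
      ENNReal.mul_rpow_of_ne_top ENNReal.ofReal_ne_top ENNReal.ofReal_ne_top]
  calc ∫⁻ ω, ENNReal.ofReal (Real.sqrt (∑ l, (X l ω) ^ 2)) ^ e ∂μ
      = ∫⁻ v, G v ∂(μ.map (fun ω l => X l ω)) := (lintegral_map' hGm.aemeasurable hXjm).symm
    _ = ∫⁻ v, G v ∂((Measure.pi fun _ : Fin d => gaussianReal 0 1).map
          fun v l => Real.sqrt Δ * v l) := by rw [hX, aux_pi_gauss_scale d hΔ]
    _ = ∫⁻ v, G (fun l => Real.sqrt Δ * v l) ∂(Measure.pi fun _ : Fin d => gaussianReal 0 1) :=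
        lintegral_map hGm hφ
    _ = ENNReal.ofReal (Real.sqrt Δ) ^ e
          * ∫⁻ v, G v ∂(Measure.pi fun _ : Fin d => gaussianReal 0 1) := by
        simp only [hGscale]
        exact lintegral_const_mul' _ _ (ENNReal.rpow_ne_top_of_nonneg he ENNReal.ofReal_ne_top)
    _ = ENNReal.ofReal (Real.sqrt Δ) ^ e
          * ∫⁻ ω', ENNReal.ofReal (Real.sqrt (∑ l, (Z l ω') ^ 2)) ^ e ∂μ' := by
        rw [← hZ, lintegral_map' hGm.aemeasurable hZjm]

lemma PartitionSeq.t_mono {r T : ℝ} (P : PartitionSeq r T) (n : ℕ) {i j : ℕ}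
    (hij : i ≤ j) (hj : j ≤ P.k n) : P.t n i ≤ P.t n j := by
  induction j with
  | zero => simp [Nat.le_zero.mp hij]
  | succ m ih =>
    rcases Nat.eq_or_lt_of_le hij with h | h
    · simp [h]
    · exact (ih (Nat.lt_succ_iff.mp h) (le_of_lt (Nat.lt_of_succ_le hj))).trans
        (le_of_lt (P.mono n m (Nat.lt_of_succ_le hj)))

lemma PartitionSeq.gap_le_mesh {r T : ℝ} (P : PartitionSeq r T) (n : ℕ) {i : ℕ}
    (hi : i < P.k n) : P.t n (i + 1) - P.t n i ≤ P.mesh n :=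
  Finset.le_sup' (fun i => P.t n (i + 1) - P.t n i) (Finset.mem_range.mpr hi)

lemma PartitionSeq.mesh_pos {r T : ℝ} (P : PartitionSeq r T) (n : ℕ) : 0 < P.mesh n :=
  lt_of_lt_of_le (sub_pos.mpr (P.mono n 0 (P.k_pos n))) (P.gap_le_mesh n (P.k_pos n))

lemma PartitionSeq.idxLt_eq {r T : ℝ} (P : PartitionSeq r T) (n : ℕ) {i : ℕ} {u : ℝ}
    (hik : i < P.k n) (hu : P.t n i < u) (hu2 : u ≤ P.t n (i + 1)) :
    P.idxLt n u = i := by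
  rw [PartitionSeq.idxLt, Nat.findGreatest_eq_iff]
  refine ⟨hik.le, fun _ => hu, fun m hm hmk => ?_⟩
  exact not_lt.mpr (hu2.trans (P.t_mono n (Nat.succ_le_of_lt hm) hmk))

lemma PartitionSeq.exists_gap {r T : ℝ} (P : PartitionSeq r T) (n : ℕ) {u : ℝ}
    (h0 : P.t n 0 < u) {m : ℕ} (hm : m ≤ P.k n) (hu : u ≤ P.t n m) :
    ∃ i < m, P.t n i < u ∧ u ≤ P.t n (i + 1) := by
  induction m with
  | zero => exact absurd (h0.trans_le hu) (lt_irrefl _)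
  | succ j ih =>
    rcases lt_or_ge (P.t n j) u with h | h
    · exact ⟨j, Nat.lt_succ_self j, h, hu⟩
    · obtain ⟨i, hi, ha, hb⟩ := ih (Nat.le_of_succ_le hm) h
      exact ⟨i, Nat.lt_succ_of_lt hi, ha, hb⟩

end AuxBM

/-- explicit integral moment estimate for the piecewise-constant derivative of
the delayed linear interpolation of a Brownian motion along balanced partitions. -/
theorem interpolated_bm_derivative_moment {d : ℕ} {Ω Ω' : Type*}
    [MeasurableSpace Ω] [MeasurableSpace Ω']
    (μ : Measure Ω) [IsProbabilityMeasure μ] (μ' : Measure Ω') [IsProbabilityMeasure μ']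
    (r T : ℝ) (hr : 0 ≤ r) (hrT : r < T)
    (P : PartitionSeq r T) (cT : ℝ) (hcT : 1 ≤ cT) (hbal : P.Balanced cT)
    (W : ℝ → Ω → Vec d) (hW : IsBrownianMotion μ W)
    (Z : Ω' → Vec d)
    (hZindep : iIndepFun (fun l : Fin d => fun ω' => Z ω' l) μ')
    (hZgauss : ∀ l : Fin d, Measure.map (fun ω' => Z ω' l) μ' = gaussianReal 0 1)
    (p q : ℝ) (hp : 1 ≤ p) (hq : 0 < q)
    (n : ℕ) (s t : ℝ) (hs : r ≤ s) (hst : s ≤ t) (ht : t ≤ T) :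
    ∫⁻ ω, (∫⁻ u in Ioc s t, (‖P.interpDeriv n (fun v => W v ω) u‖₊ : ℝ≥0∞) ^ q) ^ p ∂μ
      ≤ (∫⁻ ω', (‖Z ω'‖₊ : ℝ≥0∞) ^ (p * q) ∂μ') * ENNReal.ofReal (cT ^ (p * q))
        * ENNReal.ofReal (P.mesh n) ^ (-(p * q) / 2) * ENNReal.ofReal ((t - s) ^ p) := by
  obtain ⟨hWcont, hW0, hWindep, hWgauss⟩ := hW
  have hp0 : (0:ℝ) < p := lt_of_lt_of_le one_pos hp
  rcases eq_or_lt_of_le hst with rfl | hst'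
  · simp only [Set.Ioc_self, Measure.restrict_empty, lintegral_zero_measure,
      ENNReal.zero_rpow_of_pos hp0, lintegral_zero]
    exact zero_le
  have hpq : (0:ℝ) < p * q := mul_pos hp0 hq
  have hcT0 : (0:ℝ) < cT := lt_of_lt_of_le one_pos hcT
  have hmesh : 0 < P.mesh n := P.mesh_pos n
  set k := P.k n with hk
  have hknn : ∀ {i : ℕ}, i ≤ k → 0 ≤ P.t n i := by
    intro i hi
    have h0 := P.t_mono n (Nat.zero_le i) hi
    rw [P.left n] at h0
    exact hr.trans h0
  set EZ := ∫⁻ ω', (‖Z ω'‖₊ : ℝ≥0∞) ^ (p * q) ∂μ' with hEZdef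
  have hnorm : ∀ (x : Vec d), (‖x‖₊ : ℝ≥0∞) = ENNReal.ofReal (Real.sqrt (∑ l, x l ^ 2)) := by
    intro x
    rw [← enorm_eq_nnnorm, ← ofReal_norm, EuclideanSpace.norm_eq]
    congr 2
    exact Finset.sum_congr rfl fun l _ => by rw [Real.norm_eq_abs, sq_abs]
  set X : ℕ → Fin d → Ω → ℝ := fun i l ω => W (P.t n i) ω l - W (P.t n (i - 1)) ω l with hX
  set NX : ℕ → Ω → ℝ≥0∞ := fun i ω => ENNReal.ofReal (Real.sqrt (∑ l, (X i l ω) ^ 2)) with hNX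
  set B : ℕ → Ω → ℝ≥0∞ :=
    fun i ω => (ENNReal.ofReal (P.t n (i + 1) - P.t n i)⁻¹ * NX i ω) ^ q with hB
  set lam : ℕ → ℝ≥0∞ := fun i => volume (Ioc s t ∩ Ioc (P.t n i) (P.t n (i + 1))) with hlam
  set D := ENNReal.ofReal (t - s) with hD
  have hD0 : D ≠ 0 := (ENNReal.ofReal_pos.mpr (sub_pos.mpr hst')).ne'
  have hDt : D ≠ ∞ := ENNReal.ofReal_ne_top
  -- marginals / measurability
  have hmargX : ∀ i : ℕ, i < k → ∀ l, μ.map (X i l)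
      = gaussianReal 0 (Real.toNNReal (P.t n i - P.t n (i - 1))) := by
    intro i hik l
    exact hWgauss (P.t n (i - 1)) (P.t n i) (hknn ((Nat.sub_le i 1).trans hik.le))
      (P.t_mono n (Nat.sub_le i 1) hik.le) l
  have hXm : ∀ i : ℕ, i < k → ∀ l, AEMeasurable (X i l) μ := fun i hik l =>
    aemeasurable_of_map_neZero (by rw [hmargX i hik l]; infer_instance)
  have hNXm : ∀ i : ℕ, i < k → AEMeasurable (NX i) μ := by
    intro i hik
    apply ENNReal.measurable_ofReal.comp_aemeasurable
    apply Real.continuous_sqrt.measurable.comp_aemeasurable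
    exact Finset.aemeasurable_fun_sum _ fun l _ => (hXm i hik l).pow_const 2
  have hBpm : ∀ i : ℕ, i < k → AEMeasurable (fun ω => B i ω ^ p) μ := by
    intro i hik
    exact ((aemeasurable_const.mul (hNXm i hik)).pow aemeasurable_const).pow aemeasurable_const
  -- the Z-side joint law
  have hjointZ : μ'.map (fun ω' l => Z ω' l) = Measure.pi fun _ : Fin d => gaussianReal 0 1 := by
    refine aux_joint_law μ' (fun l ω' => Z ω' l) (fun _ => 1) ?_ hZgauss
    intro box hbox
    exact hZindep.meas_iInter fun l => ⟨box l, hbox l, rfl⟩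
  have hEZ' : ∫⁻ ω', ENNReal.ofReal (Real.sqrt (∑ l, (Z ω' l) ^ 2)) ^ (p * q) ∂μ' = EZ := by
    rw [hEZdef]
    exact (lintegral_congr fun ω' => by rw [hnorm (Z ω')]).symm
  -- per-interval moment bound
  have hmoment : ∀ i : ℕ, i < k → ∫⁻ ω, B i ω ^ p ∂μ
      ≤ ENNReal.ofReal (cT ^ (p * q)) * ENNReal.ofReal (P.mesh n) ^ (-(p * q) / 2) * EZ := by
    intro i hik
    have hΔnn : 0 ≤ P.t n i - P.t n (i - 1) :=
      sub_nonneg.mpr (P.t_mono n (Nat.sub_le i 1) hik.le)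
    have hΔ' : 0 < P.t n (i + 1) - P.t n i := sub_pos.mpr (P.mono n i hik)
    have hΔmesh : P.t n i - P.t n (i - 1) ≤ P.mesh n := by
      rcases Nat.eq_zero_or_pos i with h0 | h1
      · subst h0; simpa using hmesh.le
      · have e : i - 1 + 1 = i := Nat.succ_pred_eq_of_pos h1
        have g := P.gap_le_mesh n (i := i - 1) (by omega)
        rwa [e] at g
    -- independence of coordinates of the increment
    have hτmono : Monotone (fun j : ℕ => if j = 0 then P.t n (i - 1) else P.t n i) := by
      intro a b hab
      by_cases ha : a = 0
      · by_cases hb : b = 0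
        · simp [ha, hb]
        · simpa [ha, hb] using P.t_mono n (Nat.sub_le i 1) hik.le
      · have hb : b ≠ 0 := by omega
        simp [ha, hb]
    have hτnn : ∀ j, 0 ≤ (fun j : ℕ => if j = 0 then P.t n (i - 1) else P.t n i) j := by
      intro j
      dsimp only
      split
      · exact hknn ((Nat.sub_le i 1).trans hik.le)
      · exact hknn hik.le
    have hind := hWindep 1 _ hτmono hτnn
    have hmul : ∀ box : Fin d → Set ℝ, (∀ l, MeasurableSet (box l)) →
        μ (⋂ l, X i l ⁻¹' box l) = ∏ l, μ (X i l ⁻¹' box l) := by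
      intro box hbox
      have hfeq : ∀ p : Fin 1 × Fin d,
          (fun ω => W ((fun j : ℕ => if j = 0 then P.t n (i - 1) else P.t n i) (↑p.1 + 1)) ω p.2
            - W ((fun j : ℕ => if j = 0 then P.t n (i - 1) else P.t n i) ↑p.1) ω p.2)
          = X i p.2 := by
        intro p
        have hp1 : (p.1 : ℕ) = 0 := by omega
        simp [hp1, hX]
      have h := hind.meas_iInter (s := fun p : Fin 1 × Fin d => X i p.2 ⁻¹' box p.2)
        (fun p => ⟨box p.2, hbox p.2, by rw [hfeq p]⟩)
      have hint : (⋂ p : Fin 1 × Fin d, X i p.2 ⁻¹' box p.2) = ⋂ l, X i l ⁻¹' box l := by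
        ext ω
        simp only [Set.mem_iInter]
        exact ⟨fun hh l => hh (0, l), fun hh p => hh p.2⟩
      rw [hint] at h
      rw [h, Fintype.prod_prod_type]
      exact Fin.prod_univ_one _
    have hjointX : μ.map (fun ω l => X i l ω)
        = Measure.pi fun _ : Fin d => gaussianReal 0 (P.t n i - P.t n (i - 1)).toNNReal :=
      aux_joint_law μ (X i) _ hmul (hmargX i hik)
    have hval := aux_lintegral_norm_rpow μ μ' (X i) (fun l ω' => Z ω' l) hΔnn hjointX hjointZ
      hpq.le
    have hBp : ∀ ω, B i ω ^ p
        = ENNReal.ofReal (P.t n (i + 1) - P.t n i)⁻¹ ^ (p * q) * (NX i ω) ^ (p * q) := by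
      intro ω
      rw [hB]
      dsimp only
      rw [← ENNReal.rpow_mul, mul_comm q p,
        ENNReal.mul_rpow_of_ne_top ENNReal.ofReal_ne_top ENNReal.ofReal_ne_top]
    have h1 : (P.t n (i + 1) - P.t n i)⁻¹ ≤ cT / P.mesh n := by
      rw [inv_eq_one_div, div_le_div_iff₀ hΔ' hmesh]
      have := hbal n i hik
      linarith
    have h2 : Real.sqrt (P.t n i - P.t n (i - 1)) ≤ Real.sqrt (P.mesh n) :=
      Real.sqrt_le_sqrt hΔmesh
    calc ∫⁻ ω, B i ω ^ p ∂μ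
        = ENNReal.ofReal (P.t n (i + 1) - P.t n i)⁻¹ ^ (p * q)
          * (ENNReal.ofReal (Real.sqrt (P.t n i - P.t n (i - 1))) ^ (p * q) * EZ) := by
          simp_rw [hBp]
          rw [lintegral_const_mul' _ _
            (ENNReal.rpow_ne_top_of_nonneg hpq.le ENNReal.ofReal_ne_top)]
          rw [hNX]
          dsimp only
          rw [hval, hEZ']
      _ ≤ ENNReal.ofReal (cT / P.mesh n) ^ (p * q)
          * (ENNReal.ofReal (Real.sqrt (P.mesh n)) ^ (p * q) * EZ) := by
          exact mul_le_mul' (ENNReal.rpow_le_rpow (ENNReal.ofReal_le_ofReal h1) hpq.le)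
            (mul_le_mul' (ENNReal.rpow_le_rpow (ENNReal.ofReal_le_ofReal h2) hpq.le) le_rfl)
      _ = ENNReal.ofReal (cT ^ (p * q)) * ENNReal.ofReal (P.mesh n) ^ (-(p * q) / 2) * EZ := by
          rw [← mul_assoc]
          congr 1
          rw [ENNReal.ofReal_rpow_of_pos (div_pos hcT0 hmesh),
            ENNReal.ofReal_rpow_of_pos (Real.sqrt_pos.mpr hmesh),
            ENNReal.ofReal_rpow_of_pos hmesh,
            ← ENNReal.ofReal_mul (by positivity)]
          congr 1
          rw [Real.div_rpow hcT0.le hmesh.le, Real.sqrt_eq_rpow,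
            ← Real.rpow_mul hmesh.le, div_mul_eq_mul_div, mul_div_assoc,
            ← Real.rpow_sub hmesh]
          rw [show (1:ℝ)/2 * (p * q) - p * q = p * q * (-1/2) by ring,
            show -(p * q)/2 = p * q * (-1/2) by ring,
            ENNReal.ofReal_mul (by positivity)]
  -- pairwise disjoint slabs and the total length bound
  have hdisj : (↑(Finset.range k) : Set ℕ).PairwiseDisjoint
      (fun i => Ioc s t ∩ Ioc (P.t n i) (P.t n (i + 1))) := by
    have key : ∀ a b : ℕ, a < b → b < k →
        Disjoint (Ioc s t ∩ Ioc (P.t n a) (P.t n (a + 1)))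
          (Ioc s t ∩ Ioc (P.t n b) (P.t n (b + 1))) := by
      intro a b hab hbk
      refine Disjoint.mono inter_subset_right inter_subset_right ?_
      rw [Set.Ioc_disjoint_Ioc]
      calc min (P.t n (a + 1)) (P.t n (b + 1)) ≤ P.t n (a + 1) := min_le_left _ _
        _ ≤ P.t n b := P.t_mono n hab hbk.le
        _ ≤ max (P.t n a) (P.t n b) := le_max_right _ _
    intro i hi j hj hij
    simp only [Finset.coe_range, Set.mem_Iio] at hi hj
    rcases hij.lt_or_gt with h | h
    · exact key i j h hj
    · exact (key j i h hi).symm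
  have hlamfin : ∀ i : ℕ, lam i ≠ ∞ := by
    intro i
    refine ne_top_of_le_ne_top hDt ?_
    rw [hD, ← Real.volume_Ioc]
    exact measure_mono inter_subset_left
  have hsumlam : ∑ i ∈ Finset.range k, lam i ≤ D := by
    rw [hlam, ← measure_biUnion_finset hdisj
      (fun i _ => measurableSet_Ioc.inter measurableSet_Ioc)]
    calc volume (⋃ i ∈ Finset.range k, Ioc s t ∩ Ioc (P.t n i) (P.t n (i + 1)))
        ≤ volume (Ioc s t) := measure_mono (Set.iUnion₂_subset fun i _ => inter_subset_left)
      _ = D := by rw [hD, Real.volume_Ioc]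
  -- covering
  have hcover : Ioc s t ⊆ ⋃ i : Fin k, (Ioc s t ∩ Ioc (P.t n ↑i) (P.t n (↑i + 1))) := by
    intro u hu
    have h0 : P.t n 0 < u := by rw [P.left n]; exact lt_of_le_of_lt hs hu.1
    have hT : u ≤ P.t n k := by rw [P.right n]; exact hu.2.trans ht
    obtain ⟨i, hik, ha, hb⟩ := P.exists_gap n h0 le_rfl hT
    exact Set.mem_iUnion.mpr ⟨⟨i, hik⟩, hu, ha, hb⟩
  -- slab bound
  have hslab : ∀ (ω : Ω) (i : ℕ), i < k → ∀ u ∈ Ioc s t ∩ Ioc (P.t n i) (P.t n (i + 1)),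
      (‖P.interpDeriv n (fun v => W v ω) u‖₊ : ℝ≥0∞) ^ q ≤ B i ω := by
    intro ω i hik u hu
    rcases Nat.eq_zero_or_pos i with h0 | h1
    · subst h0
      have hu1 : u ≤ P.t n 1 := hu.2.2
      rw [PartitionSeq.interpDeriv, if_pos hu1]
      simp [ENNReal.zero_rpow_of_pos hq]
    · have hcond : ¬ u ≤ P.t n 1 := by
        push_neg
        exact lt_of_le_of_lt (P.t_mono n h1 hik.le) hu.2.1
      rw [PartitionSeq.interpDeriv, if_neg hcond, P.idxLt_eq n hik hu.2.1 hu.2.2]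
      refine le_of_eq ?_
      rw [nnnorm_smul, ENNReal.coe_mul,
        (enorm_eq_nnnorm _).symm.trans (Real.enorm_eq_ofReal (inv_nonneg.mpr (sub_nonneg.mpr (P.mono n i hik).le))),
        hnorm, hB, hNX]
      dsimp only
      congr 2
  -- pointwise bound on the inner integral
  have hpoint : ∀ ω : Ω, (∫⁻ u in Ioc s t, (‖P.interpDeriv n (fun v => W v ω) u‖₊ : ℝ≥0∞) ^ q)
      ≤ ∑ i ∈ Finset.range k, lam i * B i ω := by
    intro ω
    calc (∫⁻ u in Ioc s t, (‖P.interpDeriv n (fun v => W v ω) u‖₊ : ℝ≥0∞) ^ q)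
        ≤ ∫⁻ u in ⋃ i : Fin k, (Ioc s t ∩ Ioc (P.t n ↑i) (P.t n (↑i + 1))),
            (‖P.interpDeriv n (fun v => W v ω) u‖₊ : ℝ≥0∞) ^ q :=
          lintegral_mono_set hcover
      _ ≤ ∑' i : Fin k, ∫⁻ u in Ioc s t ∩ Ioc (P.t n ↑i) (P.t n (↑i + 1)),
            (‖P.interpDeriv n (fun v => W v ω) u‖₊ : ℝ≥0∞) ^ q :=
          lintegral_iUnion_le _ _
      _ = ∑ i ∈ Finset.range k, ∫⁻ u in Ioc s t ∩ Ioc (P.t n i) (P.t n (i + 1)),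
            (‖P.interpDeriv n (fun v => W v ω) u‖₊ : ℝ≥0∞) ^ q := by
          rw [tsum_fintype]
          exact Fin.sum_univ_eq_sum_range
            (fun i : ℕ => ∫⁻ u in Ioc s t ∩ Ioc (P.t n i) (P.t n (i + 1)),
              (‖P.interpDeriv n (fun v => W v ω) u‖₊ : ℝ≥0∞) ^ q) k
      _ ≤ ∑ i ∈ Finset.range k, lam i * B i ω := by
          refine Finset.sum_le_sum fun i hi => ?_
          calc (∫⁻ u in Ioc s t ∩ Ioc (P.t n i) (P.t n (i + 1)),
                (‖P.interpDeriv n (fun v => W v ω) u‖₊ : ℝ≥0∞) ^ q)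
              ≤ ∫⁻ _ in Ioc s t ∩ Ioc (P.t n i) (P.t n (i + 1)), B i ω :=
              setLIntegral_mono measurable_const (hslab ω i (Finset.mem_range.mp hi))
            _ = B i ω * lam i := setLIntegral_const _ _
            _ = lam i * B i ω := mul_comm _ _
  have hBne : ∀ ω : Ω, ∀ i ∈ Finset.range k, B i ω ≠ ∞ := by
    intro ω i _
    rw [hB]
    exact ENNReal.rpow_ne_top_of_nonneg hq.le
      (ENNReal.mul_ne_top ENNReal.ofReal_ne_top (by rw [hNX]; exact ENNReal.ofReal_ne_top))
  -- final assembly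
  calc ∫⁻ ω, (∫⁻ u in Ioc s t, (‖P.interpDeriv n (fun v => W v ω) u‖₊ : ℝ≥0∞) ^ q) ^ p ∂μ
      ≤ ∫⁻ ω, (∑ i ∈ Finset.range k, lam i * B i ω) ^ p ∂μ :=
        lintegral_mono fun ω => ENNReal.rpow_le_rpow (hpoint ω) hp0.le
    _ ≤ ∫⁻ ω, D ^ (p - 1) * ∑ i ∈ Finset.range k, lam i * B i ω ^ p ∂μ :=
        lintegral_mono fun ω =>
          aux_jensen _ _ _ _ hsumlam hD0 hDt (hBne ω) hp
    _ = D ^ (p - 1) * ∑ i ∈ Finset.range k, lam i * ∫⁻ ω, B i ω ^ p ∂μ := by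
        rw [lintegral_const_mul' _ _
          (ENNReal.rpow_ne_top_of_nonneg (by linarith) hDt)]
        congr 1
        rw [lintegral_finset_sum' _
          (fun i hi => (hBpm i (Finset.mem_range.mp hi)).const_mul (lam i))]
        exact Finset.sum_congr rfl fun i hi => lintegral_const_mul' _ _ (hlamfin i)
    _ ≤ D ^ (p - 1) * ∑ i ∈ Finset.range k, lam i
          * (ENNReal.ofReal (cT ^ (p * q)) * ENNReal.ofReal (P.mesh n) ^ (-(p * q) / 2) * EZ) := by
        refine mul_le_mul_right (Finset.sum_le_sum fun i hi => ?_) _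
        exact mul_le_mul_right (hmoment i (Finset.mem_range.mp hi)) _
    _ = D ^ (p - 1) * ((∑ i ∈ Finset.range k, lam i)
          * (ENNReal.ofReal (cT ^ (p * q)) * ENNReal.ofReal (P.mesh n) ^ (-(p * q) / 2) * EZ)) := by
        rw [← Finset.sum_mul]
    _ ≤ D ^ (p - 1) * (D
          * (ENNReal.ofReal (cT ^ (p * q)) * ENNReal.ofReal (P.mesh n) ^ (-(p * q) / 2) * EZ)) :=
        mul_le_mul_right (mul_le_mul_left hsumlam _) _
    _ = EZ * ENNReal.ofReal (cT ^ (p * q)) * ENNReal.ofReal (P.mesh n) ^ (-(p * q) / 2)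
          * ENNReal.ofReal ((t - s) ^ p) := by
        have h5 : D ^ (p - 1) * D = ENNReal.ofReal ((t - s) ^ p) := by
          nth_rewrite 2 [← ENNReal.rpow_one D]
          rw [← ENNReal.rpow_add _ _ hD0 hDt, sub_add_cancel, hD,
            ENNReal.ofReal_rpow_of_pos (sub_pos.mpr hst')]
        rw [← mul_assoc, h5]
        ring
end

section
/- Let p > 1 with ℝ₊-valued product measurable random fields ₙX : [0,T]² × Ω → ℝ₊. Suppose there are p̄ > p, c_{p̄} > 0 and q ≥ p̄/2 such that E[ max_{j∈{0,…,kₙ}} ∫_r^{t_{j,n}} ₙX_{t_{j,n}, s}^{p̄} ds ] ≤ c_{p̄} |𝕋ₙ|^q for all n. Then, for the delayed linear interpolation ₙW of a d-dimensional Brownian motion along the balanced partitions 𝕋ₙ, there is a constant c_p > 0 such that E[ max_{j∈{0,…,kₙ}} ( ∫_r^{t_{j,n}} ₙX_{t_{j,n}, s} |ₙẆ_s| ds )^p ] ≤ c_p |𝕋ₙ|^{p(q/p̄ − 1/2)} for all n. -/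
open MeasureTheory ProbabilityTheory Filter Set ENNReal

open scoped NNReal

section AuxLemmas

lemma integrable_abs_rpow_gauss' {b s : ℝ} (hb : 0 < b) (hs : 0 ≤ s) :
    Integrable fun x : ℝ => |x| ^ s * Real.exp (-b * x ^ 2) := by
  have h1 : IntegrableOn (fun x : ℝ => |x| ^ s * Real.exp (-b * x ^ 2)) (Ioi 0) := by
    refine (integrableOn_rpow_mul_exp_neg_mul_sq hb (by linarith : (-1:ℝ) < s)).congr_fun
      ?_ measurableSet_Ioi
    intro x hx
    simp only [abs_of_pos (show (0:ℝ) < x from hx)]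
  have h2 : IntegrableOn (fun x : ℝ => |x| ^ s * Real.exp (-b * x ^ 2)) (Iic 0) := by
    rw [← Measure.map_neg_eq_self (volume : Measure ℝ)]
    have m : MeasurableEmbedding fun x : ℝ => -x := (Homeomorph.neg ℝ).measurableEmbedding
    rw [m.integrableOn_map_iff]
    simp_rw [Function.comp_def, abs_neg, neg_sq, neg_preimage, neg_Iic, neg_zero]
    exact (integrableOn_Ici_iff_integrableOn_Ioi).mpr h1
  rw [← integrableOn_univ, ← Iic_union_Ioi (a := (0:ℝ)),
    integrableOn_union]
  exact ⟨h2, h1⟩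

open Real in
lemma gauss_abs_moment {s : ℝ} (hs : 1 ≤ s) :
    ∃ C : ℝ≥0∞, C ≠ ⊤ ∧ ∀ v : ℝ≥0,
      ∫⁻ x, ENNReal.ofReal |x| ^ s ∂(gaussianReal 0 v) ≤ C * (v : ℝ≥0∞) ^ (s/2) := by
  have hmeas : Measurable fun x : ℝ => ENNReal.ofReal |x| ^ s :=
    (ENNReal.measurable_ofReal.comp measurable_abs).pow_const s
  set C : ℝ≥0∞ := ∫⁻ x, ENNReal.ofReal |x| ^ s ∂(gaussianReal 0 1) with hC
  have hCtop : C ≠ ⊤ := by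
    rw [hC, gaussianReal_of_var_ne_zero 0 one_ne_zero,
      lintegral_withDensity_eq_lintegral_mul _ (measurable_gaussianPDF 0 1) hmeas]
    have hint : Integrable (fun x : ℝ =>
        (√(2 * π))⁻¹ * (|x| ^ s * Real.exp (-(2⁻¹) * x ^ 2))) volume :=
      (integrable_abs_rpow_gauss' (by norm_num) (by linarith)).const_mul _
    have hle : ∀ x : ℝ, (gaussianPDF 0 1 * fun x => ENNReal.ofReal |x| ^ s) x
        ≤ ENNReal.ofReal ((√(2 * π))⁻¹ * (|x| ^ s * Real.exp (-(2⁻¹) * x ^ 2))) := by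
      intro x
      simp only [Pi.mul_apply, gaussianPDF, gaussianPDFReal]
      rw [ENNReal.ofReal_rpow_of_nonneg (abs_nonneg x) (by linarith),
        ← ENNReal.ofReal_mul (by positivity)]
      apply ENNReal.ofReal_le_ofReal
      apply le_of_eq
      have h1 : ((1:ℝ≥0):ℝ) = 1 := NNReal.coe_one
      rw [h1]
      rw [show (-(x - 0) ^ 2 / (2 * (1:ℝ))) = -(2⁻¹) * x ^ 2 by ring]
      ring
    refine ne_top_of_lt (lt_of_le_of_lt (lintegral_mono hle) hint.lintegral_lt_top)
  refine ⟨C, hCtop, fun v => ?_⟩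
  by_cases hv : v = 0
  · subst hv
    rw [gaussianReal_zero_var, lintegral_dirac' _ hmeas]
    simp only [abs_zero, ENNReal.ofReal_zero]
    rw [ENNReal.zero_rpow_of_pos (by linarith)]
    exact zero_le
  · have hmap : gaussianReal 0 v = Measure.map (fun x => (√(v:ℝ)) * x) (gaussianReal 0 1) := by
      rw [gaussianReal_map_const_mul]
      congr 1
      · ring
      · ext
        simp [Real.sq_sqrt v.2]
    rw [hmap, lintegral_map' hmeas.aemeasurable (measurable_const_mul _).aemeasurable]
    have heq : ∀ x : ℝ, ENNReal.ofReal |(√(v:ℝ)) * x| ^ s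
        = ENNReal.ofReal (√(v:ℝ)) ^ s * ENNReal.ofReal |x| ^ s := by
      intro x
      rw [abs_mul, abs_of_nonneg (Real.sqrt_nonneg _), ENNReal.ofReal_mul (Real.sqrt_nonneg _),
        ENNReal.mul_rpow_of_nonneg _ _ (by linarith : (0:ℝ) ≤ s)]
    simp_rw [heq]
    rw [lintegral_const_mul _ hmeas]
    have hsq : ENNReal.ofReal (√(v:ℝ)) ^ s = (v : ℝ≥0∞) ^ (s/2) := by
      rw [ENNReal.ofReal_rpow_of_nonneg (Real.sqrt_nonneg _) (by linarith : (0:ℝ) ≤ s),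
        Real.sqrt_eq_rpow, ← Real.rpow_mul v.coe_nonneg, ← ENNReal.ofReal_coe_nnreal,
        ENNReal.ofReal_rpow_of_nonneg v.coe_nonneg (by positivity : (0:ℝ) ≤ s / 2)]
      congr 1
      ring
    rw [hsq, mul_comm]

namespace PartitionSeq

variable {r T : ℝ} (P : PartitionSeq r T)

lemma t_le_t {n i j : ℕ} (hij : i ≤ j) (hj : j ≤ P.k n) : P.t n i ≤ P.t n j := by
  induction j with
  | zero => obtain rfl : i = 0 := Nat.le_zero.mp hij; exact le_rfl
  | succ m ih =>
    rcases Nat.eq_or_lt_of_le hij with h | h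
    · exact h ▸ le_rfl
    · exact le_trans (ih (Nat.lt_succ_iff.mp h) (le_trans (Nat.le_succ m) hj))
        (le_of_lt (P.mono n m (Nat.lt_of_succ_le hj)))

lemma r_le_t {n i : ℕ} (hi : i ≤ P.k n) : r ≤ P.t n i := by
  exact le_trans (le_of_eq (P.left n).symm) (P.t_le_t (Nat.zero_le i) hi)

lemma t_le_T {n i : ℕ} (hi : i ≤ P.k n) : P.t n i ≤ T := by
  exact le_trans (P.t_le_t hi le_rfl) (le_of_eq (P.right n))

lemma mesh_pos_s8 (n : ℕ) : 0 < P.mesh n :=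
  lt_of_lt_of_le (sub_pos.mpr (P.mono n 0 (P.k_pos n)))
    (Finset.le_sup' (f := fun i => P.t n (i+1) - P.t n i) (Finset.mem_range.mpr (P.k_pos n)))

lemma delta_le_mesh {n i : ℕ} (hi : i < P.k n) : P.t n (i+1) - P.t n i ≤ P.mesh n :=
  Finset.le_sup' (f := fun i => P.t n (i+1) - P.t n i) (Finset.mem_range.mpr hi)

lemma idxLt_le (n : ℕ) (u : ℝ) : P.idxLt n u ≤ P.k n := Nat.findGreatest_le _

lemma idxLt_pos {n : ℕ} {u : ℝ} (h1 : P.t n 1 < u) : 1 ≤ P.idxLt n u :=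
  Nat.le_findGreatest (P.k_pos n) h1

lemma idxLt_lt_k {n : ℕ} {u : ℝ} (hu : u ≤ T) : P.idxLt n u < P.k n := by
  have hk := P.k_pos n
  have hT : ¬ (P.t n (P.k n) < u) := not_lt.mpr (le_of_le_of_eq hu (P.right n).symm)
  obtain ⟨k', hk'⟩ := Nat.exists_eq_succ_of_ne_zero hk.ne'
  unfold PartitionSeq.idxLt
  have hT' : ¬ P.t n (k' + 1) < u := by rw [← Nat.succ_eq_add_one, ← hk']; exact hT
  rw [hk', Nat.findGreatest_succ, if_neg hT']
  exact Nat.lt_succ_of_le (Nat.findGreatest_le k')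

lemma idxLt_mono (n : ℕ) : Monotone (P.idxLt n) := fun u v huv =>
  Nat.findGreatest_mono (fun i hi => lt_of_lt_of_le hi huv) le_rfl

end PartitionSeq

end AuxLemmas


/-- moment estimate for Volterra integrals of nonnegative random fields against
the modulus of the derivative of the interpolated Brownian motion. -/
theorem volterra_integral_against_interpolated_bm {d : ℕ} {Ω : Type*} [MeasurableSpace Ω]
    (μ : Measure Ω) [IsProbabilityMeasure μ] (r T : ℝ) (hr : 0 ≤ r) (hrT : r < T)
    (P : PartitionSeq r T) (cT : ℝ) (hcT : 1 ≤ cT) (hbal : P.Balanced cT)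
    (W : ℝ → Ω → Vec d) (hW : IsBrownianMotion μ W)
    (X : ℕ → ℝ → ℝ → Ω → ℝ) (hXpos : ∀ n t' s ω, 0 ≤ X n t' s ω)
    (hXmeas : ∀ n, Measurable fun z : ℝ × ℝ × Ω => X n z.1 z.2.1 z.2.2)
    (p pbar c q : ℝ) (hp : 1 < p) (hpbar : p < pbar) (hc : 0 < c) (hq : pbar / 2 ≤ q)
    (hbound : ∀ n, ∫⁻ ω, (⨆ j : Fin (P.k n + 1),
        ∫⁻ s in Ioc r (P.t n j), ENNReal.ofReal (X n (P.t n j) s ω) ^ pbar) ∂μ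
      ≤ ENNReal.ofReal c * ENNReal.ofReal (P.mesh n) ^ q) :
    ∃ cp > (0:ℝ), ∀ n, ∫⁻ ω, (⨆ j : Fin (P.k n + 1),
        (∫⁻ s in Ioc r (P.t n j), ENNReal.ofReal (X n (P.t n j) s ω)
          * (‖P.interpDeriv n (fun v => W v ω) s‖₊ : ℝ≥0∞)) ^ p) ∂μ
      ≤ ENNReal.ofReal cp * ENNReal.ofReal (P.mesh n) ^ (p * (q / pbar - 1/2)) := by
  classical
  -- trivial dimension case
  by_cases hd : d = 0
  · subst hd
    refine ⟨1, one_pos, fun n => ?_⟩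
    have hp0 : (0:ℝ) < p := lt_trans one_pos hp
    have hz : ∀ (ω : Ω) (s : ℝ), (‖P.interpDeriv n (fun v => W v ω) s‖₊ : ℝ≥0∞) = 0 := by
      intro ω s
      have h0 : ‖P.interpDeriv n (fun v => W v ω) s‖ = 0 := by
        rw [EuclideanSpace.norm_eq]
        simp
      have h0' : (‖P.interpDeriv n (fun v => W v ω) s‖₊ : ℝ≥0∞)
          = ENNReal.ofReal ‖P.interpDeriv n (fun v => W v ω) s‖ :=
        (ofReal_norm_eq_enorm _).symm
      rw [h0', h0]
      simp
    have hzz : ∀ ω : Ω, (⨆ j : Fin (P.k n + 1),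
        (∫⁻ s in Ioc r (P.t n (j:ℕ)), ENNReal.ofReal (X n (P.t n (j:ℕ)) s ω)
          * (‖P.interpDeriv n (fun v => W v ω) s‖₊ : ℝ≥0∞)) ^ p) = 0 := by
      intro ω
      have h1 : ∀ j : Fin (P.k n + 1), (∫⁻ s in Ioc r (P.t n (j:ℕ)),
          ENNReal.ofReal (X n (P.t n (j:ℕ)) s ω)
          * (‖P.interpDeriv n (fun v => W v ω) s‖₊ : ℝ≥0∞)) ^ p = 0 := by
        intro j
        have h2 : (∫⁻ s in Ioc r (P.t n (j:ℕ)), ENNReal.ofReal (X n (P.t n (j:ℕ)) s ω)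
            * (‖P.interpDeriv n (fun v => W v ω) s‖₊ : ℝ≥0∞)) = 0 := by
          simp_rw [hz, mul_zero]
          exact lintegral_zero
        rw [h2]
        exact ENNReal.zero_rpow_of_pos hp0
      simp_rw [h1]
      simp
    simp_rw [hzz]
    rw [lintegral_zero]
    exact zero_le
  -- main case
  have hdpos : 0 < d := Nat.pos_of_ne_zero hd
  have hp0 : (0:ℝ) < p := lt_trans one_pos hp
  have hpbar1 : (1:ℝ) < pbar := lt_trans hp hpbar
  have hpbar0 : (0:ℝ) < pbar := lt_trans one_pos hpbar1
  have hbp : (0:ℝ) < pbar - p := sub_pos.mpr hpbar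
  have hb1 : (0:ℝ) < pbar - 1 := sub_pos.mpr hpbar1
  set γ : ℝ := pbar / (pbar - 1) with hγdef
  set b : ℝ := pbar / (pbar - p) with hbdef
  set β : ℝ := p * (pbar - 1) / (pbar - p) with hβdef
  set α : ℝ := p * pbar / (pbar - p) with hαdef
  have hγpos : 0 < γ := div_pos hpbar0 hb1
  have hbpos : 0 < b := div_pos hpbar0 hbp
  have hβ1 : 1 < β := by
    rw [hβdef, lt_div_iff₀ hbp]
    nlinarith
  have hβpos : 0 < β := lt_trans one_pos hβ1
  have hα1 : 1 ≤ α := by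
    rw [hαdef, le_div_iff₀ hbp]
    nlinarith
  have hαpos : 0 < α := lt_of_lt_of_le one_pos hα1
  have hγconj : pbar.HolderConjugate γ := by
    refine Real.holderConjugate_iff.mpr ⟨hpbar1, ?_⟩
    rw [hγdef]
    field_simp
    ring
  have haconj : (pbar / p).HolderConjugate b := by
    refine Real.holderConjugate_iff.mpr ⟨(one_lt_div hp0).mpr hpbar, ?_⟩
    rw [hbdef, inv_div, inv_div]
    field_simp
    ring
  have hβconj : β.HolderConjugate (β / (β - 1)) := Real.HolderConjugate.conjExponent hβ1
  have hγβident : γ * β = α := by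
    rw [hγdef, hβdef, hαdef]
    field_simp
  have hpγb : p / γ * b = β := by
    rw [hγdef, hbdef, hβdef]
    field_simp
  -- gaussian moment
  obtain ⟨Cg, hCgtop, hCg⟩ := gauss_abs_moment hα1
  -- norm vs coordinates
  have hnorm_le : ∀ y : Vec d, (‖y‖₊ : ℝ≥0∞) ≤ ∑ l, ENNReal.ofReal |y l| := by
    intro y
    have h1 : ‖y‖ ≤ ∑ l, |y l| := by
      rw [EuclideanSpace.norm_eq]
      have h2 : ∑ l, ‖y l‖ ^ 2 ≤ (∑ l, |y l|) ^ 2 := by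
        rw [sq (∑ l, |y l|), Finset.sum_mul]
        apply Finset.sum_le_sum
        intro l _
        have h3 : |y l| ≤ ∑ m, |y m| :=
          Finset.single_le_sum (fun m _ => abs_nonneg (y m)) (Finset.mem_univ l)
        calc ‖y l‖ ^ 2 = |y l| * |y l| := by rw [Real.norm_eq_abs, sq]
          _ ≤ |y l| * ∑ m, |y m| := mul_le_mul_of_nonneg_left h3 (abs_nonneg _)
      calc √(∑ l, ‖y l‖ ^ 2) ≤ √((∑ l, |y l|) ^ 2) := Real.sqrt_le_sqrt h2
        _ = ∑ l, |y l| := Real.sqrt_sq (Finset.sum_nonneg fun l _ => abs_nonneg _)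
    calc (‖y‖₊ : ℝ≥0∞) = ENNReal.ofReal ‖y‖ := (ofReal_norm_eq_enorm _).symm
      _ ≤ ENNReal.ofReal (∑ l, |y l|) := ENNReal.ofReal_le_ofReal h1
      _ = ∑ l, ENNReal.ofReal |y l| := ENNReal.ofReal_sum_of_nonneg (fun l _ => abs_nonneg _)
  have hdne : ((d:ℝ≥0∞)) ≠ 0 := Nat.cast_ne_zero.mpr hd
  have hdnetop : ((d:ℝ≥0∞)) ≠ ⊤ := ENNReal.natCast_ne_top d
  have hsum_pow : ∀ z : Fin d → ℝ≥0∞, (∑ l, z l) ^ α ≤ (d:ℝ≥0∞) ^ α * ∑ l, z l ^ α := by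
    intro z
    have hw : ∑ _l : Fin d, ((d:ℝ≥0∞))⁻¹ = 1 := by
      rw [Finset.sum_const, Finset.card_univ, Fintype.card_fin, nsmul_eq_mul]
      exact ENNReal.mul_inv_cancel hdne hdnetop
    have h := ENNReal.rpow_arith_mean_le_arith_mean_rpow Finset.univ
      (fun _ => ((d:ℝ≥0∞))⁻¹) z hw hα1
    rw [← Finset.mul_sum, ENNReal.mul_rpow_of_nonneg _ _ hαpos.le, ENNReal.inv_rpow] at h
    have hR : ∑ l, ((d:ℝ≥0∞))⁻¹ * z l ^ α ≤ ∑ l, z l ^ α := by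
      apply Finset.sum_le_sum
      intro l _
      calc ((d:ℝ≥0∞))⁻¹ * z l ^ α ≤ 1 * z l ^ α := by
            apply mul_le_mul_left
            exact ENNReal.inv_le_one.mpr (by exact_mod_cast Nat.one_le_iff_ne_zero.mpr hd)
        _ = z l ^ α := one_mul _
    have hdα : ((d:ℝ≥0∞)) ^ α ≠ 0 :=
      (ENNReal.rpow_pos (by exact_mod_cast hdpos) hdnetop).ne'
    have hdαtop : ((d:ℝ≥0∞)) ^ α ≠ ⊤ := ENNReal.rpow_ne_top_of_nonneg hαpos.le hdnetop
    calc (∑ l, z l) ^ α = (d:ℝ≥0∞) ^ α * (((d:ℝ≥0∞) ^ α)⁻¹ * (∑ l, z l) ^ α) := by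
          rw [← mul_assoc, ENNReal.mul_inv_cancel hdα hdαtop, one_mul]
      _ ≤ (d:ℝ≥0∞) ^ α * ∑ l, z l ^ α := mul_le_mul_right (le_trans h hR) _
  -- measurable modification of W
  have hW0 : ∀ᵐ ω ∂μ, W 0 ω = 0 := hW.2.1
  have hmapW := hW.2.2.2
  have hWae : ∀ s : ℝ, 0 ≤ s → AEMeasurable (fun ω => W s ω) μ := by
    intro s hs
    have hcoord : ∀ l : Fin d, AEMeasurable (fun ω => W s ω l) μ := by
      intro l
      have h1 : AEMeasurable (fun ω => W s ω l - W 0 ω l) μ := by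
        apply aemeasurable_of_map_neZero
        rw [hmapW 0 s le_rfl hs l]
        infer_instance
      refine h1.congr ?_
      filter_upwards [hW0] with ω h0
      rw [h0]
      simp
    choose g hgmeas hgae using hcoord
    refine ⟨fun ω => WithLp.toLp 2 (fun l => g l ω), (WithLp.measurable_toLp 2 _).comp (measurable_pi_lambda _ hgmeas), ?_⟩
    filter_upwards [ae_all_iff.mpr hgae] with ω hω
    ext l
    exact hω l
  set Wm : ℝ → Ω → Vec d := fun s => if hs : 0 ≤ s then (hWae s hs).mk _ else fun _ => 0
    with hWmdef
  have hWm_meas : ∀ s, Measurable (Wm s) := by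
    intro s
    rw [hWmdef]
    dsimp only
    split_ifs with hs
    · exact (hWae s hs).measurable_mk
    · exact measurable_const
  have hWm_ae : ∀ s : ℝ, 0 ≤ s → (fun ω => W s ω) =ᵐ[μ] Wm s := by
    intro s hs
    rw [hWmdef]
    dsimp only
    rw [dif_pos hs]
    exact (hWae s hs).ae_eq_mk
  -- the constants
  set KD : ℝ≥0∞ := ENNReal.ofReal cT ^ α * ((d:ℝ≥0∞) ^ α * ((d:ℝ≥0∞) * Cg)) with hKDdef
  have hKDtop : KD ≠ ⊤ := by
    rw [hKDdef]
    apply ENNReal.mul_ne_top (ENNReal.rpow_ne_top_of_nonneg hαpos.le ENNReal.ofReal_ne_top)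
    apply ENNReal.mul_ne_top (ENNReal.rpow_ne_top_of_nonneg hαpos.le hdnetop)
    exact ENNReal.mul_ne_top hdnetop hCgtop
  set K : ℝ≥0∞ := ENNReal.ofReal c ^ (p / pbar)
    * (ENNReal.ofReal (T - r) ^ β * KD) ^ (1 / b) with hKdef
  have hKtop : K ≠ ⊤ := by
    rw [hKdef]
    apply ENNReal.mul_ne_top (ENNReal.rpow_ne_top_of_nonneg
      (div_nonneg hp0.le hpbar0.le) ENNReal.ofReal_ne_top)
    apply ENNReal.rpow_ne_top_of_nonneg (one_div_nonneg.mpr hbpos.le)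
    exact ENNReal.mul_ne_top (ENNReal.rpow_ne_top_of_nonneg hβpos.le ENNReal.ofReal_ne_top) hKDtop
  have hKle : K ≤ ENNReal.ofReal (K.toReal + 1) := by
    calc K = ENNReal.ofReal K.toReal := (ENNReal.ofReal_toReal hKtop).symm
      _ ≤ ENNReal.ofReal (K.toReal + 1) := ENNReal.ofReal_le_ofReal (by linarith)
  refine ⟨K.toReal + 1, by positivity, fun n => ?_⟩
  set M : ℝ≥0∞ := ENNReal.ofReal (P.mesh n) with hMdef
  have hmesh : 0 < P.mesh n := P.mesh_pos_s8 n
  have hM0 : M ≠ 0 := by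
    rw [hMdef]
    exact (ENNReal.ofReal_pos.mpr hmesh).ne'
  have hMtop : M ≠ ⊤ := by rw [hMdef]; exact ENNReal.ofReal_ne_top
  -- measurable version of the interpolation derivative
  set D : ℝ → Ω → Vec d := fun u ω =>
    if u ≤ P.t n 1 then 0
    else (P.t n (P.idxLt n u + 1) - P.t n (P.idxLt n u))⁻¹ •
      (Wm (P.t n (P.idxLt n u)) ω - Wm (P.t n (P.idxLt n u - 1)) ω) with hDdef
  have hDmeas : Measurable fun z : ℝ × Ω => D z.1 z.2 := by
    have hidx : Measurable (P.idxLt n) := (P.idxLt_mono n).measurable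
    have hG : Measurable fun z : Ω × ℕ =>
        (P.t n (z.2 + 1) - P.t n z.2)⁻¹ • (Wm (P.t n z.2) z.1 - Wm (P.t n (z.2 - 1)) z.1) := by
      apply measurable_from_prod_countable_left
      intro i
      dsimp only
      exact Measurable.const_smul ((hWm_meas _).sub (hWm_meas _)) ((P.t n (i + 1) - P.t n i)⁻¹ : ℝ)
    have heq : (fun z : ℝ × Ω => D z.1 z.2) = fun z : ℝ × Ω =>
        if z.1 ≤ P.t n 1 then 0 else
          (fun w : Ω × ℕ => (P.t n (w.2 + 1) - P.t n w.2)⁻¹ •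
            (Wm (P.t n w.2) w.1 - Wm (P.t n (w.2 - 1)) w.1)) (z.2, P.idxLt n z.1) := by
      funext z
      rw [hDdef]
    rw [heq]
    refine Measurable.ite ?_ measurable_const
      (hG.comp (measurable_snd.prodMk (hidx.comp measurable_fst)))
    exact measurableSet_le (measurable_fst.comp measurable_id) measurable_const
  -- a.e. identification of the interpolation derivative
  have hWeq : ∀ᵐ ω ∂μ, ∀ i : ℕ, i ≤ P.k n → W (P.t n i) ω = Wm (P.t n i) ω := by
    rw [ae_all_iff]
    intro i
    by_cases hik : i ≤ P.k n
    · filter_upwards [hWm_ae (P.t n i) (le_trans hr (P.r_le_t hik))] with ω hω _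
      exact hω
    · exact ae_of_all _ fun ω h => absurd h hik
  have hDae : ∀ᵐ ω ∂μ, ∀ u : ℝ, P.interpDeriv n (fun v => W v ω) u = D u ω := by
    filter_upwards [hWeq] with ω hω u
    rw [hDdef]
    simp only [PartitionSeq.interpDeriv]
    by_cases h1 : u ≤ P.t n 1
    · simp [h1]
    · simp only [if_neg h1]
      rw [hω (P.idxLt n u) (P.idxLt_le n u),
        hω (P.idxLt n u - 1) (le_trans (Nat.sub_le _ _) (P.idxLt_le n u))]
  -- per-time moment bound
  have hDmom : ∀ u ∈ Ioc r T, ∫⁻ ω, (‖D u ω‖₊ : ℝ≥0∞) ^ α ∂μ ≤ KD * M ^ (-(α/2)) := by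
    intro u hu
    by_cases h1 : u ≤ P.t n 1
    · have hz : ∀ ω, (‖D u ω‖₊ : ℝ≥0∞) ^ α = 0 := by
        intro ω
        rw [hDdef]
        simp only [if_pos h1]
        simp [ENNReal.zero_rpow_of_pos hαpos]
      simp_rw [hz]
      rw [lintegral_zero]
      exact zero_le
    · set i := P.idxLt n u with hidef
      have hik : i < P.k n := P.idxLt_lt_k hu.2
      have hi1 : 1 ≤ i := P.idxLt_pos (not_le.mp h1)
      have hΔpos : 0 < P.t n (i+1) - P.t n i := sub_pos.mpr (P.mono n i hik)
      have hcbound : (P.t n (i+1) - P.t n i)⁻¹ ≤ cT / P.mesh n := by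
        rw [le_div_iff₀ hmesh]
        calc (P.t n (i+1) - P.t n i)⁻¹ * P.mesh n
            ≤ (P.t n (i+1) - P.t n i)⁻¹ * (cT * (P.t n (i+1) - P.t n i)) :=
              mul_le_mul_of_nonneg_left (hbal n i hik) (inv_nonneg.mpr hΔpos.le)
          _ = cT := by field_simp
      have hpt : ∀ ω, (‖D u ω‖₊ : ℝ≥0∞) ^ α
          = ENNReal.ofReal (P.t n (i+1) - P.t n i)⁻¹ ^ α
            * (‖Wm (P.t n i) ω - Wm (P.t n (i-1)) ω‖₊ : ℝ≥0∞) ^ α := by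
        intro ω
        have hDval : D u ω = (P.t n (i+1) - P.t n i)⁻¹ •
            (Wm (P.t n i) ω - Wm (P.t n (i-1)) ω) := by
          rw [hDdef]
          simp only [if_neg h1]
          rfl
        rw [hDval, nnnorm_smul, ENNReal.coe_mul, ← enorm_eq_nnnorm,
          Real.enorm_eq_ofReal (inv_nonneg.mpr hΔpos.le),
          ENNReal.mul_rpow_of_nonneg _ _ hαpos.le]
      simp_rw [hpt]
      rw [lintegral_const_mul' _ _ (ENNReal.rpow_ne_top_of_nonneg hαpos.le ENNReal.ofReal_ne_top)]
      have hymeas : ∀ l : Fin d, Measurable fun ω =>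
          ENNReal.ofReal |Wm (P.t n i) ω l - Wm (P.t n (i-1)) ω l| ^ α := by
        intro l
        apply Measurable.pow_const
        apply ENNReal.measurable_ofReal.comp
        apply Measurable.abs
        exact ((measurable_pi_apply l).comp ((WithLp.measurable_ofLp 2 _).comp (hWm_meas _))).sub
          ((measurable_pi_apply l).comp ((WithLp.measurable_ofLp 2 _).comp (hWm_meas _)))
      have hi1' : i - 1 ≤ P.k n := le_trans (Nat.sub_le _ _) (le_of_lt hik)
      have hcoordint : ∀ l : Fin d,
          ∫⁻ ω, ENNReal.ofReal |Wm (P.t n i) ω l - Wm (P.t n (i-1)) ω l| ^ α ∂μ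
            ≤ Cg * M ^ (α/2) := by
        intro l
        have h0le : 0 ≤ P.t n (i-1) := le_trans hr (P.r_le_t hi1')
        have hle2 : P.t n (i-1) ≤ P.t n i := P.t_le_t (Nat.sub_le _ _) (le_of_lt hik)
        have hmap := hmapW (P.t n (i-1)) (P.t n i) h0le hle2 l
        have hgae : AEMeasurable (fun ω => W (P.t n i) ω l - W (P.t n (i-1)) ω l) μ := by
          apply aemeasurable_of_map_neZero
          rw [hmap]
          infer_instance
        have hcongr : (fun ω => ENNReal.ofReal |Wm (P.t n i) ω l - Wm (P.t n (i-1)) ω l| ^ α)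
            =ᵐ[μ] fun ω => ENNReal.ofReal |W (P.t n i) ω l - W (P.t n (i-1)) ω l| ^ α := by
          filter_upwards [hWm_ae (P.t n i) (le_trans hr (P.r_le_t (le_of_lt hik))),
            hWm_ae (P.t n (i-1)) (le_trans hr (P.r_le_t hi1'))] with ω e1 e2
          rw [← e1, ← e2]
        have hfm : Measurable fun x : ℝ => ENNReal.ofReal |x| ^ α :=
          measurable_abs.ennreal_ofReal.pow_const α
        rw [lintegral_congr_ae hcongr, ← lintegral_map' hfm.aemeasurable hgae, hmap]
        refine le_trans (hCg _) ?_
        apply mul_le_mul_right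
        apply ENNReal.rpow_le_rpow _ (by positivity)
        show ((Real.toNNReal (P.t n i - P.t n (i-1))) : ℝ≥0∞) ≤ M
        rw [hMdef]
        have hgoal : ENNReal.ofReal (P.t n i - P.t n (i-1)) ≤ ENNReal.ofReal (P.mesh n) := by
          apply ENNReal.ofReal_le_ofReal
          have hii : i - 1 + 1 = i := Nat.succ_pred_eq_of_pos hi1
          have hdm : P.t n ((i-1)+1) - P.t n (i-1) ≤ P.mesh n :=
            P.delta_le_mesh (lt_of_le_of_lt (Nat.sub_le i 1) hik)
          rw [hii] at hdm
          exact hdm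
        exact hgoal
      have hyint : ∫⁻ ω, (‖Wm (P.t n i) ω - Wm (P.t n (i-1)) ω‖₊ : ℝ≥0∞) ^ α ∂μ
          ≤ (d:ℝ≥0∞) ^ α * ((d:ℝ≥0∞) * (Cg * M ^ (α/2))) := by
        have hstep : ∀ ω, (‖Wm (P.t n i) ω - Wm (P.t n (i-1)) ω‖₊ : ℝ≥0∞) ^ α
            ≤ (d:ℝ≥0∞) ^ α * ∑ l, ENNReal.ofReal |Wm (P.t n i) ω l - Wm (P.t n (i-1)) ω l| ^ α := by
          intro ω
          have h4 : (‖Wm (P.t n i) ω - Wm (P.t n (i-1)) ω‖₊ : ℝ≥0∞) ^ α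
              ≤ (∑ l, ENNReal.ofReal |(Wm (P.t n i) ω - Wm (P.t n (i-1)) ω) l|) ^ α :=
            ENNReal.rpow_le_rpow (hnorm_le _) hαpos.le
          refine le_trans h4 (le_trans (hsum_pow _) ?_)
          apply mul_le_mul_right
          apply Finset.sum_le_sum
          intro l _
          apply le_of_eq
          rfl
        calc ∫⁻ ω, (‖Wm (P.t n i) ω - Wm (P.t n (i-1)) ω‖₊ : ℝ≥0∞) ^ α ∂μ
            ≤ ∫⁻ ω, (d:ℝ≥0∞) ^ α
              * ∑ l, ENNReal.ofReal |Wm (P.t n i) ω l - Wm (P.t n (i-1)) ω l| ^ α ∂μ :=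
              lintegral_mono hstep
          _ = (d:ℝ≥0∞) ^ α * ∫⁻ ω,
              ∑ l, ENNReal.ofReal |Wm (P.t n i) ω l - Wm (P.t n (i-1)) ω l| ^ α ∂μ :=
              lintegral_const_mul' _ _ (ENNReal.rpow_ne_top_of_nonneg hαpos.le hdnetop)
          _ = (d:ℝ≥0∞) ^ α * ∑ l, ∫⁻ ω,
              ENNReal.ofReal |Wm (P.t n i) ω l - Wm (P.t n (i-1)) ω l| ^ α ∂μ := by
              rw [lintegral_finset_sum _ (fun l _ => hymeas l)]
          _ ≤ (d:ℝ≥0∞) ^ α * ∑ _l : Fin d, (Cg * M ^ (α/2)) := by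
              apply mul_le_mul_right
              exact Finset.sum_le_sum fun l _ => hcoordint l
          _ = (d:ℝ≥0∞) ^ α * ((d:ℝ≥0∞) * (Cg * M ^ (α/2))) := by
              rw [Finset.sum_const, Finset.card_univ, Fintype.card_fin, nsmul_eq_mul]
      calc ENNReal.ofReal (P.t n (i+1) - P.t n i)⁻¹ ^ α
            * ∫⁻ ω, (‖Wm (P.t n i) ω - Wm (P.t n (i-1)) ω‖₊ : ℝ≥0∞) ^ α ∂μ
          ≤ ENNReal.ofReal (cT / P.mesh n) ^ α
            * ((d:ℝ≥0∞) ^ α * ((d:ℝ≥0∞) * (Cg * M ^ (α/2)))) :=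
            mul_le_mul' (ENNReal.rpow_le_rpow (ENNReal.ofReal_le_ofReal hcbound) hαpos.le) hyint
        _ = KD * M ^ (-(α/2)) := by
            rw [hKDdef, ENNReal.ofReal_div_of_pos hmesh,
              ENNReal.div_rpow_of_nonneg _ _ hαpos.le, ← hMdef,
              div_eq_mul_inv, ← ENNReal.rpow_neg]
            rw [show M ^ (-(α/2)) = M ^ (-α) * M ^ (α/2) from by
              rw [← ENNReal.rpow_add _ _ hM0 hMtop]; congr 1; ring]
            ring
  -- the two main functionals
  have htj : ∀ j : Fin (P.k n + 1), P.t n (j:ℕ) ≤ T := fun j => P.t_le_T (Nat.lt_succ_iff.mp j.2)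
  set F1 : Ω → ℝ≥0∞ := fun ω => ⨆ j : Fin (P.k n + 1),
    ∫⁻ s in Ioc r (P.t n (j:ℕ)), ENNReal.ofReal (X n (P.t n (j:ℕ)) s ω) ^ pbar with hF1def
  set G : Ω → ℝ≥0∞ := fun ω => ∫⁻ s in Ioc r T, (‖D s ω‖₊ : ℝ≥0∞) ^ γ with hGdef
  have hF1meas : Measurable F1 := by
    rw [hF1def]
    apply Measurable.iSup
    intro j
    have h5 : Measurable fun z : Ω × ℝ => ENNReal.ofReal (X n (P.t n (j:ℕ)) z.2 z.1) ^ pbar := by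
      apply Measurable.pow_const
      apply ENNReal.measurable_ofReal.comp
      exact (hXmeas n).comp (measurable_const.prodMk (measurable_snd.prodMk measurable_fst))
    exact Measurable.lintegral_prod_right h5
  have hGmeas : Measurable G := by
    rw [hGdef]
    have h5 : Measurable fun z : Ω × ℝ => (‖D z.2 z.1‖₊ : ℝ≥0∞) ^ γ :=
      ((hDmeas.comp measurable_swap).enorm).pow_const γ
    exact Measurable.lintegral_prod_right h5
  -- first Hölder (in time) and sup bound
  have hstep1 : ∀ᵐ ω ∂μ, (⨆ j : Fin (P.k n + 1),
      (∫⁻ s in Ioc r (P.t n (j:ℕ)), ENNReal.ofReal (X n (P.t n (j:ℕ)) s ω)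
        * (‖P.interpDeriv n (fun v => W v ω) s‖₊ : ℝ≥0∞)) ^ p)
      ≤ F1 ω ^ (p / pbar) * G ω ^ (p / γ) := by
    filter_upwards [hDae] with ω hω
    apply iSup_le
    intro j
    have hfmeas : AEMeasurable (fun s => ENNReal.ofReal (X n (P.t n (j:ℕ)) s ω))
        (volume.restrict (Ioc r (P.t n (j:ℕ)))) := by
      apply Measurable.aemeasurable
      apply ENNReal.measurable_ofReal.comp
      exact (hXmeas n).comp (measurable_const.prodMk (measurable_id.prodMk measurable_const))
    have hgmeas : Measurable fun s : ℝ => (‖D s ω‖₊ : ℝ≥0∞) :=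
      (hDmeas.comp (measurable_id.prodMk measurable_const)).enorm
    have hH := ENNReal.lintegral_mul_le_Lp_mul_Lq (volume.restrict (Ioc r (P.t n (j:ℕ))))
      hγconj hfmeas hgmeas.aemeasurable
    have hmono2 : (∫⁻ s in Ioc r (P.t n (j:ℕ)), (‖D s ω‖₊ : ℝ≥0∞) ^ γ)
        ≤ ∫⁻ s in Ioc r T, (‖D s ω‖₊ : ℝ≥0∞) ^ γ :=
      lintegral_mono' (Measure.restrict_mono (Ioc_subset_Ioc_right (htj j)) le_rfl) le_rfl
    calc (∫⁻ s in Ioc r (P.t n (j:ℕ)), ENNReal.ofReal (X n (P.t n (j:ℕ)) s ω)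
          * (‖P.interpDeriv n (fun v => W v ω) s‖₊ : ℝ≥0∞)) ^ p
        = (∫⁻ s in Ioc r (P.t n (j:ℕ)),
            ((fun s => ENNReal.ofReal (X n (P.t n (j:ℕ)) s ω))
              * fun s => (‖D s ω‖₊ : ℝ≥0∞)) s) ^ p := by
          congr 1
          apply lintegral_congr
          intro s
          simp only [Pi.mul_apply]
          rw [hω s]
      _ ≤ ((∫⁻ s in Ioc r (P.t n (j:ℕ)), ENNReal.ofReal (X n (P.t n (j:ℕ)) s ω) ^ pbar) ^ (1/pbar)
            * (∫⁻ s in Ioc r (P.t n (j:ℕ)), (‖D s ω‖₊ : ℝ≥0∞) ^ γ) ^ (1/γ)) ^ p :=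
          ENNReal.rpow_le_rpow hH hp0.le
      _ ≤ ((∫⁻ s in Ioc r (P.t n (j:ℕ)), ENNReal.ofReal (X n (P.t n (j:ℕ)) s ω) ^ pbar) ^ (1/pbar)
            * G ω ^ (1/γ)) ^ p := by
          apply ENNReal.rpow_le_rpow _ hp0.le
          exact mul_le_mul_right (ENNReal.rpow_le_rpow hmono2 (one_div_nonneg.mpr hγpos.le)) _
      _ ≤ (F1 ω ^ (1/pbar) * G ω ^ (1/γ)) ^ p := by
          apply ENNReal.rpow_le_rpow _ hp0.le
          apply mul_le_mul_left
          apply ENNReal.rpow_le_rpow _ (one_div_nonneg.mpr hpbar0.le)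
          exact le_iSup (fun j : Fin (P.k n + 1) => ∫⁻ s in Ioc r (P.t n (j:ℕ)),
            ENNReal.ofReal (X n (P.t n (j:ℕ)) s ω) ^ pbar) j
      _ = F1 ω ^ (p / pbar) * G ω ^ (p / γ) := by
          rw [ENNReal.mul_rpow_of_nonneg _ _ hp0.le, ← ENNReal.rpow_mul, ← ENNReal.rpow_mul,
            show 1/pbar * p = p / pbar from by ring, show 1/γ * p = p / γ from by ring]
  -- bound on the β-moment of G
  have hTr0 : ENNReal.ofReal (T - r) ≠ 0 := (ENNReal.ofReal_pos.mpr (by linarith)).ne'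
  have hswapmeas : Measurable fun z : Ω × ℝ => (‖D z.2 z.1‖₊ : ℝ≥0∞) ^ α :=
    ((hDmeas.comp measurable_swap).enorm).pow_const α
  have hGβ : ∫⁻ ω, G ω ^ β ∂μ ≤ ENNReal.ofReal (T - r) ^ β * (KD * M ^ (-(α/2))) := by
    have hper : ∀ ω, G ω ^ β ≤ ENNReal.ofReal (T - r) ^ (β - 1)
        * (∫⁻ u in Ioc r T, (‖D u ω‖₊ : ℝ≥0∞) ^ α) := by
      intro ω
      have hfg := ENNReal.lintegral_mul_le_Lp_mul_Lq (volume.restrict (Ioc r T)) hβconj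
        (f := fun u => (‖D u ω‖₊ : ℝ≥0∞) ^ γ) (g := fun _ => 1)
        ((hDmeas.comp (measurable_id.prodMk measurable_const)).enorm.pow_const γ).aemeasurable
        aemeasurable_const
      simp only [Pi.mul_apply, mul_one, ENNReal.one_rpow] at hfg
      rw [lintegral_one, Measure.restrict_apply_univ, Real.volume_Ioc] at hfg
      calc G ω ^ β ≤ (((∫⁻ u in Ioc r T, ((‖D u ω‖₊ : ℝ≥0∞) ^ γ) ^ β) ^ (1/β))
            * ENNReal.ofReal (T - r) ^ (1 / (β / (β - 1)))) ^ β :=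
          ENNReal.rpow_le_rpow hfg hβpos.le
        _ = (∫⁻ u in Ioc r T, ((‖D u ω‖₊ : ℝ≥0∞) ^ γ) ^ β)
            * ENNReal.ofReal (T - r) ^ (β - 1) := by
            rw [ENNReal.mul_rpow_of_nonneg _ _ hβpos.le, ← ENNReal.rpow_mul, ← ENNReal.rpow_mul,
              show 1/β * β = 1 from by field_simp,
              show 1 / (β / (β - 1)) * β = β - 1 from by
                rw [one_div_div]
                field_simp,
              ENNReal.rpow_one]
        _ = ENNReal.ofReal (T - r) ^ (β - 1) * ∫⁻ u in Ioc r T, (‖D u ω‖₊ : ℝ≥0∞) ^ α := by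
            rw [mul_comm]
            congr 1
            apply lintegral_congr
            intro u
            rw [← ENNReal.rpow_mul, hγβident]
    calc ∫⁻ ω, G ω ^ β ∂μ
        ≤ ∫⁻ ω, ENNReal.ofReal (T - r) ^ (β - 1)
            * (∫⁻ u in Ioc r T, (‖D u ω‖₊ : ℝ≥0∞) ^ α) ∂μ := lintegral_mono hper
      _ = ENNReal.ofReal (T - r) ^ (β - 1)
            * ∫⁻ ω, (∫⁻ u in Ioc r T, (‖D u ω‖₊ : ℝ≥0∞) ^ α) ∂μ :=
          lintegral_const_mul' _ _
            (ENNReal.rpow_ne_top_of_nonneg (by linarith) ENNReal.ofReal_ne_top)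
      _ = ENNReal.ofReal (T - r) ^ (β - 1)
            * ∫⁻ u in Ioc r T, (∫⁻ ω, (‖D u ω‖₊ : ℝ≥0∞) ^ α ∂μ) := by
          congr 1
          exact lintegral_lintegral_swap (f := fun ω u => (‖D u ω‖₊ : ℝ≥0∞) ^ α)
            hswapmeas.aemeasurable
      _ ≤ ENNReal.ofReal (T - r) ^ (β - 1) * ∫⁻ _u in Ioc r T, KD * M ^ (-(α/2)) := by
          apply mul_le_mul_right
          exact setLIntegral_mono measurable_const hDmom
      _ = ENNReal.ofReal (T - r) ^ β * (KD * M ^ (-(α/2))) := by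
          rw [setLIntegral_const, Real.volume_Ioc]
          have hmerge : ENNReal.ofReal (T - r) ^ (β - 1) * ENNReal.ofReal (T - r)
              = ENNReal.ofReal (T - r) ^ β := by
            nth_rewrite 2 [← ENNReal.rpow_one (ENNReal.ofReal (T - r))]
            rw [← ENNReal.rpow_add _ _ hTr0 ENNReal.ofReal_ne_top]
            norm_num
          rw [← hmerge]
          ring
  -- second Hölder (in ω) and conclusion
  have hmain := ENNReal.lintegral_mul_le_Lp_mul_Lq μ haconj
    (f := fun ω => F1 ω ^ (p/pbar)) (g := fun ω => G ω ^ (p/γ))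
    (hF1meas.pow_const _).aemeasurable (hGmeas.pow_const _).aemeasurable
  simp only [Pi.mul_apply] at hmain
  have hsimp1 : ∀ ω, (F1 ω ^ (p/pbar)) ^ (pbar / p) = F1 ω := by
    intro ω
    rw [← ENNReal.rpow_mul, show p/pbar * (pbar/p) = 1 from by field_simp, ENNReal.rpow_one]
  have hsimp2 : ∀ ω, (G ω ^ (p/γ)) ^ b = G ω ^ β := by
    intro ω
    rw [← ENNReal.rpow_mul, hpγb]
  simp_rw [hsimp1, hsimp2] at hmain
  have hexp : q * (p/pbar) + (-(α/2)) * (1/b) = p * (q / pbar - 1/2) := by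
    rw [hαdef, hbdef]
    field_simp
    ring
  calc ∫⁻ ω, (⨆ j : Fin (P.k n + 1),
        (∫⁻ s in Ioc r (P.t n (j:ℕ)), ENNReal.ofReal (X n (P.t n (j:ℕ)) s ω)
          * (‖P.interpDeriv n (fun v => W v ω) s‖₊ : ℝ≥0∞)) ^ p) ∂μ
      ≤ ∫⁻ ω, F1 ω ^ (p/pbar) * G ω ^ (p/γ) ∂μ := lintegral_mono_ae hstep1
    _ ≤ (∫⁻ ω, F1 ω ∂μ) ^ (1/(pbar/p)) * (∫⁻ ω, G ω ^ β ∂μ) ^ (1/b) := hmain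
    _ ≤ (ENNReal.ofReal c * M ^ q) ^ (1/(pbar/p))
        * (ENNReal.ofReal (T - r) ^ β * (KD * M ^ (-(α/2)))) ^ (1/b) := by
        apply mul_le_mul'
        · apply ENNReal.rpow_le_rpow _ (one_div_nonneg.mpr (div_nonneg hpbar0.le hp0.le))
          exact hbound n
        · exact ENNReal.rpow_le_rpow hGβ (one_div_nonneg.mpr hbpos.le)
    _ = K * M ^ (p * (q / pbar - 1/2)) := by
        rw [one_div_div]
        rw [ENNReal.mul_rpow_of_nonneg _ _ (div_nonneg hp0.le hpbar0.le),
          ← mul_assoc (ENNReal.ofReal (T - r) ^ β) KD,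
          ENNReal.mul_rpow_of_nonneg (ENNReal.ofReal (T - r) ^ β * KD) _
            (one_div_nonneg.mpr hbpos.le),
          ← ENNReal.rpow_mul M q, ← ENNReal.rpow_mul M (-(α/2))]
        rw [hKdef, ← hexp, ENNReal.rpow_add _ _ hM0 hMtop]
        ring
    _ ≤ ENNReal.ofReal (K.toReal + 1) * M ^ (p * (q / pbar - 1/2)) := mul_le_mul_left hKle _
end

section
/- Let G be a non-anticipative functional on [r,t) × D([0,T],ℝ^m) that is twice vertically differentiable with d_∞-continuous second vertical derivative ∂_{xx}G. Then ∂_{xx}G is symmetric: ∂_{x_k x_l} G = ∂_{x_l x_k} G for all k,l ∈ {1,…,m}. -/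
open MeasureTheory ProbabilityTheory Filter Set ENNReal

section AuxSchwarz

variable {E : Type*} [NormedAddCommGroup E] [NormedSpace ℝ E]

lemma vertShift_zero' (x : ℝ → E) (s : ℝ) : vertShift x s 0 = x := by
  funext u; simp [vertShift]

lemma vertShift_vertShift' (x : ℝ → E) (s : ℝ) (h e : E) :
    vertShift (vertShift x s h) s e = vertShift x s (h + e) := by
  funext u; by_cases hsu : s ≤ u <;> simp [vertShift, hsu] <;> abel

lemma cadlag_vertShift' {x : ℝ → E} (hx : Cadlag x) (s : ℝ) (h : E) :
    Cadlag (vertShift x s h) := by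
  constructor
  · intro u
    by_cases hsu : s ≤ u
    · have heq : ∀ v ∈ Ici u, vertShift x s h v = x v + h := by
        intro v hv; simp [vertShift, le_trans hsu hv]
      exact ((hx.1 u).add continuousWithinAt_const).congr heq (by simp [vertShift, hsu])
    · have hmem : Iio s ∈ nhdsWithin u (Ici u) :=
        nhdsWithin_le_nhds (Iio_mem_nhds (lt_of_not_ge hsu))
      have heq : ∀ᶠ v in nhdsWithin u (Ici u), vertShift x s h v = x v := by
        filter_upwards [hmem] with v hv
        simp only [vertShift, if_neg (not_le.2 (Set.mem_Iio.1 hv))]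
      have hval : vertShift x s h u = x u := by simp only [vertShift, if_neg hsu]
      exact (hx.1 u).congr_of_eventuallyEq heq hval
  · intro u
    obtain ⟨L, hL⟩ := hx.2 u
    by_cases hsu : s < u
    · refine ⟨L + h, ?_⟩
      have hmem : Ici s ∈ nhdsWithin u (Iio u) :=
        mem_nhdsWithin_of_mem_nhds (Ici_mem_nhds hsu)
      have heq : ∀ᶠ v in nhdsWithin u (Iio u), x v + h = vertShift x s h v := by
        filter_upwards [hmem] with v hv
        simp only [vertShift, if_pos (Set.mem_Ici.1 hv)]
      exact (hL.add_const h).congr' heq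
    · refine ⟨L, ?_⟩
      have hmem : Iio s ∈ nhdsWithin u (Iio u) :=
        Filter.mem_of_superset self_mem_nhdsWithin
          (Iio_subset_Iio (not_lt.1 hsu))
      have heq : ∀ᶠ v in nhdsWithin u (Iio u), x v = vertShift x s h v := by
        filter_upwards [hmem] with v hv
        simp only [vertShift, if_neg (not_le.2 (Set.mem_Iio.1 hv))]
      exact hL.congr' heq

lemma hasFDerivAt_translate {F : Type*} [NormedAddCommGroup F] [NormedSpace ℝ F]
    {f : E → F} {D : E →L[ℝ] F} {h : E}
    (hf : HasFDerivAt (fun e => f (h + e)) D 0) : HasFDerivAt f D h := by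
  have hψ : HasFDerivAt (fun y : E => y - h) (ContinuousLinearMap.id ℝ E) h := by
    simpa using (hasFDerivAt_id h).sub_const h
  have key : HasFDerivAt ((fun e => f (h + e)) ∘ (fun y : E => y - h))
      (D.comp (ContinuousLinearMap.id ℝ E)) h :=
    HasFDerivAt.comp h (by simpa using hf) hψ
  have hcomp : ((fun e => f (h + e)) ∘ fun y : E => y - h) = f := by
    funext y; simp [Function.comp]
  rw [hcomp] at key
  simpa using key

end AuxSchwarz

/-- symmetry of the second vertical derivative of a twice vertically
differentiable non-anticipative functional with `d_∞`-continuous second vertical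
derivative (Schwarz's lemma). -/
theorem second_vertical_derivative_symmetric {m : ℕ} (r tmax T : ℝ)
    (hr : 0 ≤ r) (hrt : r < tmax) (htT : tmax ≤ T)
    (G : ℝ → (ℝ → Vec m) → ℝ)
    (Gx : ℝ → (ℝ → Vec m) → (Vec m →L[ℝ] ℝ))
    (Gxx : ℝ → (ℝ → Vec m) → (Vec m →L[ℝ] Vec m →L[ℝ] ℝ))
    (hna : ∀ s ∈ Ico r tmax, ∀ x : ℝ → Vec m, Cadlag x → G s x = G s (stopAt x s))
    (hvert : ∀ s ∈ Ico r tmax, ∀ x : ℝ → Vec m, Cadlag x →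
      HasVertDerivAt G s x (Gx s x))
    (hvert2 : ∀ s ∈ Ico r tmax, ∀ x : ℝ → Vec m, Cadlag x →
      HasVertDerivAt (fun s' y => Gx s' y) s x (Gxx s x))
    (hcont : DInftyContinuous r tmax T (fun s' y => Gxx s' y)) :
    ∀ s ∈ Ico r tmax, ∀ x : ℝ → Vec m, Cadlag x →
      ∀ v w : Vec m, Gxx s x v w = Gxx s x w v := by
  intro s hs x hx v w
  set f : Vec m → ℝ := fun h => G s (vertShift x s h) with hf_def
  set f' : Vec m → (Vec m →L[ℝ] ℝ) := fun h => Gx s (vertShift x s h) with hf'_def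
  have hderiv : ∀ h : Vec m, HasFDerivAt f (f' h) h := by
    intro h
    apply hasFDerivAt_translate
    have h1 := hvert s hs (vertShift x s h) (cadlag_vertShift' hx s h)
    unfold HasVertDerivAt at h1
    simpa [hf_def, vertShift_vertShift'] using h1
  have hderiv2 : HasFDerivAt f' (Gxx s x) 0 := by
    have h2 := hvert2 s hs x hx
    unfold HasVertDerivAt at h2
    have : HasFDerivAt (fun e => f' (0 + e)) (Gxx s x) 0 := by
      simpa [hf'_def, vertShift_vertShift', zero_add] using h2
    simpa using hasFDerivAt_translate this
  exact second_derivative_symmetric hderiv hderiv2 v w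
end
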